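/- arXiv:1708.09800 — 12 statements merged into one kernel-verified Lean document; each statement's English description precedes it below -/
import Mathlib

section
/- Let L be a commutative semiring (with 0 and 1) whose addition is idempotent and which satisfies the incline absorption law a + a*b = a for all a, b, with the incline order defined by x ≤ y iff x + y = y. Assume L has the unique square root property and the LI-property. Then the square root function is increasing: if x, y, c, d ∈ L satisfy x ≤ y, c*c = x and d*d = y, then c ≤ d. -/
/-- In a commutative incline with the unique square root property
and the LI-property, the square root function is increasing w.r.t. the incline
order `x ≤ y ↔ x + y = y`. -/
theorem stmt_2 {L : Type*} [CommSemiring L]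
    (hidem : ∀ a : L, a + a = a)
    (habs : ∀ a b : L, a + a * b = a)
    (hLI : ∀ x y : L, x + y = y → ∃ z : L, x = y * z)
    (hsq : ∀ x : L, ∃! c : L, c * c = x)
    (x y c d : L) (hxy : x + y = y) (hc : c * c = x) (hd : d * d = y) :
    c + d = d := by
  obtain ⟨z, hz⟩ := hLI x y hxy
  obtain ⟨s, hs, -⟩ := hsq z
  obtain ⟨r, -, hr⟩ := hsq x
  have h1 : (d * s) * (d * s) = x := by
    rw [hz, ← hd, ← hs]; ring
  have hcd : c = d * s := by
    rw [hr c hc, hr (d * s) h1]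
  rw [hcd, add_comm, habs]
end

section
/- Let L be a commutative semiring (with 0 and 1) whose addition is idempotent and which satisfies the incline absorption law a + a*b = a for all a, b, with the incline order defined by x ≤ y iff x + y = y. If the incline order on L is total (for all x, y ∈ L, x ≤ y or y ≤ x), then L has the AG-property: x*y ≤ x*x + y*y for all x, y ∈ L. -/
/-- If the incline order (`x ≤ y ↔ x + y = y`) on a commutative
incline is total, then the incline has the AG-property: `x*y ≤ x*x + y*y`. -/
theorem stmt_3 {L : Type*} [CommSemiring L]
    (hidem : ∀ a : L, a + a = a)
    (habs : ∀ a b : L, a + a * b = a)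
    (htot : ∀ x y : L, x + y = y ∨ y + x = x) :
    ∀ x y : L, x * y + (x * x + y * y) = x * x + y * y := by
  intro x y
  rcases htot x y with h | h
  · have : x * y + y * y = y * y := by
      rw [← add_mul, h]
    rw [add_comm (x*x), ← add_assoc, this]
  · have : x * y + x * x = x * x := by
      rw [mul_comm x y, ← add_mul, h]
    rw [← add_assoc, this]
end

section
/- Let L be a commutative semiring (with 0 and 1) whose addition is idempotent and which satisfies the incline absorption law a + a*b = a for all a, b, and suppose L has the AG-property (x*y ≤ x*x + y*y for all x, y, where x ≤ y iff x + y = y). Then for every k ≥ 1 and every family x₁, …, x_k ∈ L, the sum of the squares equals the square of the sum: x₁*x₁ + ⋯ + x_k*x_k = (x₁ + ⋯ + x_k)*(x₁ + ⋯ + x_k). -/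
lemma two_sq {L : Type*} [CommSemiring L]
    (hidem : ∀ a : L, a + a = a)
    (hAG : ∀ x y : L, x * y + (x * x + y * y) = x * x + y * y)
    (a b : L) : (a + b) * (a + b) = a * a + b * b := by
  have h2 : (a + b) * (a + b) = a * b + a * b + (a * a + b * b) := by ring
  rw [h2, hidem (a*b), hAG]

/-- In a commutative incline with the AG-property, the sum of the
squares of any finite family (k ≥ 1) equals the square of the sum. -/
theorem stmt_5 {L : Type*} [CommSemiring L]
    (hidem : ∀ a : L, a + a = a)
    (habs : ∀ a b : L, a + a * b = a)
    (hAG : ∀ x y : L, x * y + (x * x + y * y) = x * x + y * y)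
    (k : ℕ) (hk : 1 ≤ k) (x : Fin k → L) :
    (∑ i, x i * x i) = (∑ i, x i) * (∑ i, x i) := by
  clear hk habs
  induction k with
  | zero => simp
  | succ n ih =>
    rw [Fin.sum_univ_succ, Fin.sum_univ_succ (f := x),
      two_sq hidem hAG, ih]
end

section
/- Let L be a normal incline and let A be an n×n symmetric matrix over L (Aᵀ = A). Then the following are equivalent: (1) A is positive semidefinite, i.e., there exist m ∈ ℕ and an n×m matrix B over L with A = B * Bᵀ; (2) A is completely positive, i.e., there exist m ∈ ℕ and an n×m matrix B over L with A = B * Bᵀ in which every entry of B is a square (for each entry b there is c ∈ L with b = c*c); (3) every 2×2 principal submatrix of A has its positive determinant greater than or equal to its negative determinant, i.e., A i j * A j i ≤ A i i * A j j for all i, j; (4) there exist a diagonal matrix D over L and a symmetric matrix M over L with M i i = 1 for all i, such that A = D * M * D. -/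
open Matrix Finset

section InclineAux

variable {L : Type*} [CommSemiring L]

private lemma inc_add_le {a b c : L} (h1 : a + c = c) (h2 : b + c = c) :
    (a + b) + c = c := by
  rw [add_assoc, h2, h1]

private lemma inc_le_trans {a b c : L} (h1 : a + b = b) (h2 : b + c = c) :
    a + c = c := by
  rw [← h2, ← add_assoc, h1]

private lemma inc_antisymm {a b : L} (h1 : a + b = b) (h2 : b + a = a) : a = b := by
  calc a = b + a := h2.symm
  _ = a + b := add_comm _ _
  _ = b := h1

private lemma inc_sum_le {ι : Type*} (s : Finset ι) (f : ι → L) (c : L) :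
    (∀ i ∈ s, f i + c = c) → (∑ i ∈ s, f i) + c = c := by
  classical
  induction s using Finset.induction_on with
  | empty => intro _; simp
  | insert _ _ hx ih =>
    intro h
    rw [Finset.sum_insert hx, add_assoc,
      ih (fun i hi => h i (Finset.mem_insert_of_mem hi)),
      h _ (Finset.mem_insert_self _ _)]

private lemma inc_le_sum (hidem : ∀ a : L, a + a = a) {ι : Type*} {s : Finset ι} {a : ι}
    (ha : a ∈ s) (f : ι → L) : f a + ∑ i ∈ s, f i = ∑ i ∈ s, f i := by
  classical
  conv_lhs => rw [← Finset.add_sum_erase s f ha]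
  rw [← add_assoc, hidem, Finset.add_sum_erase s f ha]

private lemma inc_sqrt_mono (hidem : ∀ a : L, a + a = a)
    (hsq : ∀ x : L, ∃! c : L, c * c = x)
    (hAG : ∀ x y : L, x * y + (x * x + y * y) = x * x + y * y)
    {a b : L} (h : a * a + b * b = b * b) : a + b = b := by
  have h1 : (a + b) * (a + b) = (a * b + a * b) + (a * a + b * b) := by ring
  rw [hidem, hAG, h] at h1
  exact (hsq (b * b)).unique h1 rfl

/-- auxiliary matrix-entry function for the construction in (3) → (1) -/
private def gmat {n : ℕ} (d : Fin n → L) (w : Fin n → Fin n → L)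
    (i : Fin n) (pq : Fin n × Fin n) : L :=
  (if i = pq.1 then d pq.1 * w pq.1 pq.2 else 0)
    + (if i = pq.2 then d pq.2 * w pq.1 pq.2 else 0)

end InclineAux

/-- Characterization of completely positive matrices over a normal
incline: for a symmetric matrix `A` over a normal incline `L`, the following
are equivalent: (1) `A` is positive semidefinite; (2) `A` is completely
positive; (3) every 2×2 principal submatrix has `det⁺ ≥ det⁻`; (4) `A = D*M*D`
with `D` diagonal and `M` symmetric with unit diagonal. -/
theorem stmt_6 {L : Type*} [CommSemiring L]
    (hidem : ∀ a : L, a + a = a)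
    (habs : ∀ a b : L, a + a * b = a)
    (hLI : ∀ x y : L, x + y = y → ∃ z : L, x = y * z)
    (hsq : ∀ x : L, ∃! c : L, c * c = x)
    (hAG : ∀ x y : L, x * y + (x * x + y * y) = x * x + y * y)
    (n : ℕ) (A : Matrix (Fin n) (Fin n) L) (hsymm : Aᵀ = A) :
    [ (∃ m : ℕ, ∃ B : Matrix (Fin n) (Fin m) L, A = B * Bᵀ),
      (∃ m : ℕ, ∃ B : Matrix (Fin n) (Fin m) L, A = B * Bᵀ ∧
        ∀ i j, ∃ c : L, B i j = c * c),
      (∀ i j : Fin n, A i j * A j i + A i i * A j j = A i i * A j j),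
      (∃ D M : Matrix (Fin n) (Fin n) L, D.IsDiag ∧ Mᵀ = M ∧
        (∀ i, M i i = 1) ∧ A = D * M * D) ].TFAE := by
  classical
  have hs : ∀ i j, A j i = A i j := fun i j => by
    rw [show A j i = Aᵀ i j from rfl, hsymm]
  choose d hd using fun i : Fin n => (hsq (A i i)).exists
  tfae_have 1 → 2 := by
    rintro ⟨m, B, hB⟩
    exact ⟨m, B, hB, fun i j => ⟨(hsq (B i j)).choose, ((hsq (B i j)).choose_spec.1).symm⟩⟩
  tfae_have 2 → 1 := by
    rintro ⟨m, B, hB, -⟩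
    exact ⟨m, B, hB⟩
  tfae_have 1 → 3 := by
    rintro ⟨m, B, hB⟩ i j
    have hA : ∀ a b, A a b = ∑ k, B a k * B b k := by
      intro a b; rw [hB, Matrix.mul_apply]; rfl
    rw [hA i j, hA j i, hA i i, hA j j, Finset.sum_mul_sum, Finset.sum_mul_sum]
    have hterm2 : ∀ a b : Fin m, (B i a * B i a) * (B j b * B j b)
        + ∑ k, ∑ l, (B i k * B i k) * (B j l * B j l)
        = ∑ k, ∑ l, (B i k * B i k) * (B j l * B j l) := by
      intro a b
      exact inc_le_trans
        (inc_le_sum hidem (Finset.mem_univ b) (fun l => (B i a * B i a) * (B j l * B j l)))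
        (inc_le_sum hidem (Finset.mem_univ a)
          (fun k => ∑ l, (B i k * B i k) * (B j l * B j l)))
    refine inc_sum_le _ _ _ (fun k _ => inc_sum_le _ _ _ (fun l _ => ?_))
    have e1 : (B i k * B j k) * (B j l * B i l)
        = (B i k * B j l) * (B i l * B j k) := by ring
    rw [e1]
    have hx : (B i k * B j l) * (B i k * B j l)
        + ∑ k, ∑ l, (B i k * B i k) * (B j l * B j l)
        = ∑ k, ∑ l, (B i k * B i k) * (B j l * B j l) := by
      have e : (B i k * B j l) * (B i k * B j l)
          = (B i k * B i k) * (B j l * B j l) := by ring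
      rw [e]; exact hterm2 k l
    have hy : (B i l * B j k) * (B i l * B j k)
        + ∑ k, ∑ l, (B i k * B i k) * (B j l * B j l)
        = ∑ k, ∑ l, (B i k * B i k) * (B j l * B j l) := by
      have e : (B i l * B j k) * (B i l * B j k)
          = (B i l * B i l) * (B j k * B j k) := by ring
      rw [e]; exact hterm2 l k
    exact inc_le_trans (hAG (B i k * B j l) (B i l * B j k)) (inc_add_le hx hy)
  tfae_have 3 → 4 := by
    intro h3
    have key : ∀ i j, A i j + d i * d j = d i * d j := by
      intro i j
      apply inc_sqrt_mono hidem hsq hAG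
      have e : (d i * d j) * (d i * d j) = A i i * A j j := by
        rw [mul_mul_mul_comm, hd, hd]
      rw [e]
      have h := h3 i j
      rwa [hs i j] at h
    choose z hz using fun i j => hLI (A i j) (d i * d j) (key i j)
    refine ⟨Matrix.diagonal d, Matrix.of fun i j => if i = j then 1 else z i j + z j i,
      Matrix.isDiag_diagonal d, ?_, ?_, ?_⟩
    · ext i j
      show (if j = i then (1 : L) else z j i + z i j) = (if i = j then 1 else z i j + z j i)
      by_cases h : i = j
      · subst h; simp
      · rw [if_neg (fun h' => h h'.symm), if_neg h, add_comm]
    · intro i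
      show (if i = i then (1 : L) else z i i + z i i) = 1
      rw [if_pos rfl]
    · ext i j
      rw [Matrix.mul_diagonal, Matrix.diagonal_mul]
      show A i j = d i * (if i = j then 1 else z i j + z j i) * d j
      by_cases h : i = j
      · subst h
        rw [if_pos rfl, mul_one, hd]
      · rw [if_neg h]
        have e : d i * (z i j + z j i) * d j
            = d i * d j * z i j + d j * d i * z j i := by ring
        rw [e, ← hz i j, ← hz j i, hs i j, hidem]
  tfae_have 4 → 3 := by
    rintro ⟨D, M, hdiag, hMsymm, hMdiag, hA⟩ i j
    have hentry : ∀ a b, A a b = D a a * M a b * D b b := by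
      intro a b
      rw [hA, Matrix.mul_apply]
      rw [Finset.sum_eq_single b]
      · rw [Matrix.mul_apply, Finset.sum_eq_single a]
        · intro k _ hk
          rw [hdiag (Ne.symm hk), zero_mul]
        · intro h; exact absurd (Finset.mem_univ a) h
      · intro k _ hk
        rw [hdiag hk, mul_zero]
      · intro h; exact absurd (Finset.mem_univ b) h
    rw [hentry i j, hentry j i, hentry i i, hentry j j, hMdiag i, hMdiag j]
    have e : (D i i * M i j * D j j) * (D j j * M j i * D i i)
        = ((D i i * 1 * D i i) * (D j j * 1 * D j j)) * (M i j * M j i) := by ring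
    rw [e, add_comm]
    exact habs _ _
  tfae_have 3 → 1 := by
    intro h3
    have key : ∀ i j, A i j + d i * d j = d i * d j := by
      intro i j
      apply inc_sqrt_mono hidem hsq hAG
      have e : (d i * d j) * (d i * d j) = A i i * A j j := by
        rw [mul_mul_mul_comm, hd, hd]
      rw [e]
      have h := h3 i j
      rwa [hs i j] at h
    choose z hz using fun i j => hLI (A i j) (d i * d j) (key i j)
    choose w hw using fun p q => (hsq (z p q)).exists
    refine ⟨n * n, Matrix.of fun i k => gmat d w i (finProdFinEquiv.symm k), ?_⟩
    ext i j
    rw [Matrix.mul_apply]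
    simp only [Matrix.transpose_apply, Matrix.of_apply]
    have hsum : ∑ k : Fin (n * n), gmat d w i (finProdFinEquiv.symm k)
          * gmat d w j (finProdFinEquiv.symm k)
        = ∑ pq : Fin n × Fin n, gmat d w i pq * gmat d w j pq :=
      Fintype.sum_equiv finProdFinEquiv.symm _ _ (fun k => rfl)
    rw [hsum]
    have hterm : ∀ p q : Fin n, gmat d w i (p, q) * gmat d w j (p, q) + A i j = A i j := by
      intro p q
      have expand : gmat d w i (p, q) * gmat d w j (p, q) =
          (if i = p then d p * w p q else 0) * (if j = p then d p * w p q else 0)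
        + ((if i = p then d p * w p q else 0) * (if j = q then d q * w p q else 0)
        + ((if i = q then d q * w p q else 0) * (if j = p then d p * w p q else 0)
        + (if i = q then d q * w p q else 0) * (if j = q then d q * w p q else 0))) := by
        show ((if i = p then d p * w p q else 0) + (if i = q then d q * w p q else 0))
            * ((if j = p then d p * w p q else 0) + (if j = q then d q * w p q else 0)) = _
        ring
      rw [expand]
      refine inc_add_le ?_ (inc_add_le ?_ (inc_add_le ?_ ?_))
      · split_ifs with h1 h2
        · have e : d p * w p q * (d p * w p q) = A p p * z p q := by
            rw [mul_mul_mul_comm, hw, hd]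
          rw [e, h1, h2, add_comm]
          exact habs _ _
        all_goals simp
      · split_ifs with h1 h2
        · rw [mul_mul_mul_comm, hw, ← hz, h1, h2]
          exact hidem _
        all_goals simp
      · split_ifs with h1 h2
        · have e : d q * w p q * (d p * w p q) = d p * d q * (w p q * w p q) := by ring
          rw [e, hw, ← hz, h1, h2, hs p q]
          exact hidem _
        all_goals simp
      · split_ifs with h1 h2
        · have e : d q * w p q * (d q * w p q) = A q q * z p q := by
            rw [mul_mul_mul_comm, hw, hd]
          rw [e, h1, h2, add_comm]
          exact habs _ _
        all_goals simp
    have hmain : gmat d w i (i, j) * gmat d w j (i, j) = A i j := by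
      by_cases hij : i = j
      · subst hij
        have e1 : gmat d w i (i, i) = d i * w i i := by
          show (if i = i then d i * w i i else 0) + (if i = i then d i * w i i else 0)
            = d i * w i i
          rw [if_pos rfl, hidem]
        rw [e1, mul_mul_mul_comm, hw]
        exact (hz i i).symm
      · have e1 : gmat d w i (i, j) = d i * w i j := by
          show (if i = i then d i * w i j else 0) + (if i = j then d j * w i j else 0)
            = d i * w i j
          rw [if_pos rfl, if_neg hij, add_zero]
        have e2 : gmat d w j (i, j) = d j * w i j := by
          show (if j = i then d i * w i j else 0) + (if j = j then d j * w i j else 0)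
            = d j * w i j
          rw [if_pos rfl, if_neg (fun h' => hij h'.symm), zero_add]
        rw [e1, e2, mul_mul_mul_comm, hw]
        exact (hz i j).symm
    refine inc_antisymm ?_ ?_
    · have h := inc_le_sum hidem (Finset.mem_univ (i, j))
        (fun pq => gmat d w i pq * gmat d w j pq)
      rwa [hmain] at h
    · exact inc_sum_le _ _ _ (fun pq _ => hterm pq.1 pq.2)
  tfae_finish
end

section
/- Let L be a normal incline and let A be an n×n symmetric matrix over L that is diagonally dominant, i.e., for every index i the sum over all j ≠ i of A i j is ≤ A i i in the incline order. Then A is completely positive: there exist m ∈ ℕ and an n×m matrix B over L with A = B * Bᵀ. -/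
open Matrix

/-- Every symmetric diagonally dominant matrix over a normal
incline is completely positive. -/
theorem stmt_7 {L : Type*} [CommSemiring L]
    (hidem : ∀ a : L, a + a = a)
    (habs : ∀ a b : L, a + a * b = a)
    (hLI : ∀ x y : L, x + y = y → ∃ z : L, x = y * z)
    (hsq : ∀ x : L, ∃! c : L, c * c = x)
    (hAG : ∀ x y : L, x * y + (x * x + y * y) = x * x + y * y)
    (n : ℕ) (A : Matrix (Fin n) (Fin n) L) (hsymm : Aᵀ = A)
    (hdd : ∀ i : Fin n, (∑ j ∈ Finset.univ.erase i, A i j) + A i i = A i i) :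
    ∃ m : ℕ, ∃ B : Matrix (Fin n) (Fin m) L, A = B * Bᵀ := by
  classical
  -- square roots
  set c : L → L := fun x => (hsq x).choose with hc
  have hcc : ∀ x, c x * c x = x := fun x => (hsq x).choose_spec.1
  have hA : ∀ k l, A k l = A l k := by
    intro k l; exact (congrFun (congrFun hsymm k) l).symm
  -- row sum equals diagonal entry
  have hrow : ∀ i : Fin n, ∑ l, A i l = A i i := by
    intro i
    rw [← Finset.sum_erase_add Finset.univ _ (Finset.mem_univ i), hdd i]
  -- the column entries, indexed by q : Fin n × Fin n
  set C : Fin n × Fin n → Fin n → L :=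
    fun q i => if i = q.1 ∨ i = q.2 then c (A q.1 q.2) else 0 with hC
  refine ⟨n * n, Matrix.of fun i p => C (finProdFinEquiv.symm p) i, ?_⟩
  ext i j
  simp only [Matrix.mul_apply, Matrix.transpose_apply, Matrix.of_apply]
  rw [← Equiv.sum_comp (finProdFinEquiv : Fin n × Fin n ≃ Fin (n * n))
      (fun p => C (finProdFinEquiv.symm p) i * C (finProdFinEquiv.symm p) j)]
  simp only [Equiv.symm_apply_apply]
  by_cases hij : i = j
  · -- diagonal case
    subst hij
    have hterm : ∀ q : Fin n × Fin n,
        C q i * C q i = if i = q.1 ∨ i = q.2 then A q.1 q.2 else 0 := by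
      intro q
      simp only [hC]
      split_ifs with h
      · exact hcc _
      · simp
    calc A i i = ∑ k, A i k := (hrow i).symm
    _ = ∑ q : Fin n × Fin n, C q i * C q i := by
        rw [Fintype.sum_prod_type]
        refine Finset.sum_congr rfl fun k _ => ?_
        rw [show (∑ l, C (k, l) i * C (k, l) i)
            = ∑ l, if i = k ∨ i = l then A k l else 0 from
          Finset.sum_congr rfl fun l _ => hterm (k, l)]
        by_cases hk : i = k
        · subst hk
          simp only [true_or, if_true]
          exact (hrow i).symm ▸ (hrow i) ▸ rfl
        · simp only [hk, false_or]
          rw [Finset.sum_ite_eq Finset.univ i (fun l => A k l)]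
          simp [hA i k]
  · -- off-diagonal case
    have hne : ((i, j) : Fin n × Fin n) ≠ (j, i) := by
      simp [Prod.ext_iff]; intro h; exact absurd h hij
    have hzero : ∀ q ∈ Finset.univ, q ∉ ({(i, j), (j, i)} : Finset (Fin n × Fin n)) →
        C q i * C q j = 0 := by
      rintro ⟨k, l⟩ _ hq
      simp only [Finset.mem_insert, Finset.mem_singleton, Prod.mk.injEq, not_or,
        not_and] at hq
      simp only [hC]
      split_ifs with h1 h2
      · exfalso
        rcases h1 with h | h <;> rcases h2 with h' | h' <;> subst h <;> subst h'
        · exact hij rfl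
        · exact hq.1 rfl rfl
        · exact hq.2 rfl rfl
        · exact hij rfl
      · simp
      · simp
      · simp
    rw [← Finset.sum_subset (Finset.subset_univ ({(i, j), (j, i)} : Finset (Fin n × Fin n)))
      hzero, Finset.sum_pair hne]
    simp only [hC]
    simp only [true_or, or_true, if_true, hcc]
    rw [hA j i, hidem]
end

section
/- Let L be a regular incline (a commutative incline with 0 and 1 in which a*a = a for all a ∈ L) having the LI-property, and let A be an n×n symmetric matrix over L. Then A is positive semidefinite (equivalently completely positive), i.e., there exist m ∈ ℕ and an n×m matrix B over L with A = B * Bᵀ, if and only if A is diagonally dominant, i.e., for every index i the sum over all j ≠ i of A i j is ≤ A i i in the incline order. -/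
open Matrix

/-- Over a regular incline with the LI-property, a symmetric
matrix is positive semidefinite (equivalently completely positive) iff it is
diagonally dominant. -/
theorem stmt_8 {L : Type*} [CommSemiring L]
    (hidem : ∀ a : L, a + a = a)
    (habs : ∀ a b : L, a + a * b = a)
    (hreg : ∀ a : L, a * a = a)
    (hLI : ∀ x y : L, x + y = y → ∃ z : L, x = y * z)
    (n : ℕ) (A : Matrix (Fin n) (Fin n) L) (hsymm : Aᵀ = A) :
    (∃ m : ℕ, ∃ B : Matrix (Fin n) (Fin m) L, A = B * Bᵀ) ↔
      (∀ i : Fin n, (∑ j ∈ Finset.univ.erase i, A i j) + A i i = A i i) := by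
  have hs : ∀ a b, A a b = A b a := fun a b =>
    ((congrFun (congrFun hsymm a) b).symm.trans (A.transpose_apply a b))
  constructor
  · rintro ⟨m, B, rfl⟩
    intro i
    have hdiag : (B * Bᵀ) i i = ∑ k, B i k := by
      simp [Matrix.mul_apply, hreg]
    have hentry : ∀ j, (B * Bᵀ) i j + (B * Bᵀ) i i = (B * Bᵀ) i i := by
      intro j
      rw [hdiag]
      simp only [Matrix.mul_apply, Matrix.transpose_apply]
      rw [← Finset.sum_add_distrib]
      refine Finset.sum_congr rfl fun k _ => ?_
      rw [add_comm]
      exact habs _ _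
    have key : ∀ s : Finset (Fin n),
        (∑ j ∈ s, (B * Bᵀ) i j) + (B * Bᵀ) i i = (B * Bᵀ) i i := by
      intro s
      induction s using Finset.induction with
      | empty => simp
      | insert _ _ h ih =>
        rw [Finset.sum_insert h, add_assoc, ih, hentry]
    exact key _
  · intro hdd
    refine ⟨n * n, Matrix.of fun i k =>
      if i = (finProdFinEquiv.symm k).1 ∨ i = (finProdFinEquiv.symm k).2 then
        A (finProdFinEquiv.symm k).1 (finProdFinEquiv.symm k).2 else 0, ?_⟩
    ext i j
    rw [Matrix.mul_apply]
    rw [← Equiv.sum_comp (finProdFinEquiv : Fin n × Fin n ≃ Fin (n * n))]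
    simp only [Matrix.transpose_apply, Matrix.of_apply, Equiv.symm_apply_apply]
    rw [Fintype.sum_prod_type]
    by_cases hij : i = j
    · subst hij
      have hsq : ∀ p q : Fin n,
          (if i = p ∨ i = q then A p q else 0) * (if i = p ∨ i = q then A p q else 0)
            = if i = p ∨ i = q then A p q else 0 := by
        intro p q; split <;> simp [hreg]
      have h1 : ∀ p : Fin n,
          (∑ q, (if i = p ∨ i = q then A p q else 0) * (if i = p ∨ i = q then A p q else 0))
            = if p = i then ∑ q, A i q else A p i := by
        intro p
        by_cases hp : p = i
        · subst hp; simp [hreg]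
        · simp only [hsq]
          simp [hp, Ne.symm hp, Finset.sum_ite_eq]
      rw [Finset.sum_congr rfl (fun p _ => h1 p)]
      rw [← Finset.add_sum_erase _ _ (Finset.mem_univ i)]
      have h2 : (∑ p ∈ Finset.univ.erase i, if p = i then ∑ q, A i q else A p i)
          = ∑ p ∈ Finset.univ.erase i, A i p := by
        refine Finset.sum_congr rfl fun p hp => ?_
        rw [if_neg (Finset.ne_of_mem_erase hp), hs]
      rw [h2, if_pos rfl, ← Finset.sum_erase_add _ _ (Finset.mem_univ i)]
      rw [add_assoc, add_comm (A i i), hdd i, hdd i]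
    · have key : ∀ p q : Fin n,
          (if i = p ∨ i = q then A p q else 0) * (if j = p ∨ j = q then A p q else 0)
            = (if i = p ∧ j = q then A i j else 0) + (if j = p ∧ i = q then A j i else 0) := by
        intro p q
        by_cases h1 : i = p <;> by_cases h2 : i = q <;> by_cases h3 : j = p <;>
          by_cases h4 : j = q <;> simp_all [hreg]
      simp only [key, Finset.sum_add_distrib]
      have e1 : (∑ p, ∑ q, if i = p ∧ j = q then A i j else 0) = A i j := by
        simp [ite_and, Finset.sum_ite_eq', Finset.sum_ite_eq]
      have e2 : (∑ p, ∑ q, if j = p ∧ i = q then A j i else 0) = A j i := by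
        simp [ite_and, Finset.sum_ite_eq', Finset.sum_ite_eq]
      rw [e1, e2, hs j i, hidem]
end

section
/- Let L be a totally ordered normal incline, let n ∈ {2, 3}, and let A be an n×n completely positive matrix over L (A = B * Bᵀ for some n×m matrix B over L). Then the CP-rank of A is at most n: there exists an n×n matrix B' over L with A = B' * B'ᵀ. -/
open Matrix

/-- Over a totally ordered normal incline, every n×n completely
positive matrix with n ∈ {2,3} has CP-rank at most n. -/
theorem stmt_9 {L : Type*} [CommSemiring L]
    (hidem : ∀ a : L, a + a = a)
    (habs : ∀ a b : L, a + a * b = a)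
    (hLI : ∀ x y : L, x + y = y → ∃ z : L, x = y * z)
    (hsq : ∀ x : L, ∃! c : L, c * c = x)
    (hAG : ∀ x y : L, x * y + (x * x + y * y) = x * x + y * y)
    (htot : ∀ x y : L, x + y = y ∨ y + x = x)
    (n : ℕ) (hn : n = 2 ∨ n = 3)
    (A : Matrix (Fin n) (Fin n) L)
    (hcp : ∃ m : ℕ, ∃ B : Matrix (Fin n) (Fin m) L, A = B * Bᵀ) :
    ∃ B' : Matrix (Fin n) (Fin n) L, A = B' * B'ᵀ := by
  classical
  obtain ⟨m, B, hA⟩ := hcp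
  choose s hs0 hu0 using hsq
  have hs : ∀ x : L, s x * s x = x := hs0
  have hu : ∀ x y : L, y * y = x → y = s x := hu0
  have htrans : ∀ x y z : L, x + y = y → y + z = z → x + z = z := by
    intro x y z h1 h2
    rw [← h2, ← add_assoc, h1]
  have hmono : ∀ x y c : L, x + y = y → x * c + y * c = y * c := by
    intro x y c h; rw [← add_mul, h]
  have hsqle : ∀ x y : L, x + y = y → x * x + y * y = y * y := by
    intro x y h
    refine htrans (x * x) (y * x) (y * y) ?_ ?_
    · rw [← add_mul, h]
    · rw [mul_comm y x, mul_comm y y, ← add_mul, h]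
  have hle_sqrt : ∀ x y : L, x * x + y = y → x + s y = s y := by
    intro x y h
    rcases htot x (s y) with h' | h'
    · exact h'
    · have h1 : s y * s y + x * x = x * x := hsqle _ _ h'
      rw [hs y] at h1
      have h2 : x * x = y := by
        calc x * x = y + x * x := h1.symm
          _ = x * x + y := add_comm _ _
          _ = y := h
      rw [hu y x h2]; exact hidem _
  have hsqrt_mul : ∀ x y : L, s x * s y = s (x * y) := by
    intro x y
    exact hu (x * y) (s x * s y) (by rw [mul_mul_mul_comm, hs, hs])
  have hsum_le : ∀ {ι : Type} (t : Finset ι) (f : ι → L) (c : L),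
      (∀ i ∈ t, f i + c = c) → (∑ i ∈ t, f i) + c = c := by
    intro ι t f c h
    refine Finset.sum_induction f (fun x => x + c = c) ?_ (zero_add c) h
    intro a b ha hb; rw [add_assoc, hb, ha]
  have hle_sum : ∀ {ι : Type} (t : Finset ι) (f : ι → L) (i : ι), i ∈ t →
      f i + ∑ j ∈ t, f j = ∑ j ∈ t, f j := by
    intro ι t f i hi
    rw [← Finset.add_sum_erase t f hi, ← add_assoc, hidem]
  have hentry : ∀ i j, A i j = ∑ k, B i k * B j k := by
    intro i j; rw [hA, mul_apply]; simp [transpose_apply]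
  have hsymm : ∀ i j, A i j = A j i := by
    intro i j; rw [hentry, hentry]
    exact Finset.sum_congr rfl fun k _ => mul_comm _ _
  have hdiagle : ∀ (i : Fin n) (k : Fin m), B i k * B i k + A i i = A i i := by
    intro i k; rw [hentry]
    exact hle_sum Finset.univ (fun t => B i t * B i t) k (Finset.mem_univ k)
  have hkey : ∀ i j : Fin n, ∃ e : L, A i j = s (A i i) * e ∧ e * e + A j j = A j j := by
    intro i j
    have hii : ∀ k l : Fin m, B i k * B i l + A i i = A i i := fun k l =>
      htrans _ _ _ (hAG _ _) (by rw [add_assoc, hdiagle i l, hdiagle i k])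
    have hjj : ∀ k l : Fin m, B j k * B j l + A j j = A j j := fun k l =>
      htrans _ _ _ (hAG _ _) (by rw [add_assoc, hdiagle j l, hdiagle j k])
    have h1 : A i j * A i j + A i i * A j j = A i i * A j j := by
      rw [hentry i j, Finset.sum_mul_sum]
      refine hsum_le _ _ _ ?_
      intro k _
      refine hsum_le _ _ _ ?_
      intro l _
      have h2 : (B i k * B i l) * (B j k * B j l) + A i i * A j j = A i i * A j j :=
        htrans _ _ _ (hmono _ _ _ (hii k l)) (by rw [← mul_add, hjj k l])
      calc B i k * B j k * (B i l * B j l) + A i i * A j j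
          = (B i k * B i l) * (B j k * B j l) + A i i * A j j := by ring_nf
        _ = A i i * A j j := h2
    have h3 : A i j + s (A i i) * s (A j j) = s (A i i) * s (A j j) := by
      rw [hsqrt_mul]; exact hle_sqrt _ _ h1
    obtain ⟨z, hz⟩ := hLI _ _ h3
    refine ⟨s (A j j) * z, ?_, ?_⟩
    · rw [hz]; ring
    · have h4 : (s (A j j) * z) * (s (A j j) * z) = A j j * (z * z) := by
        rw [mul_mul_mul_comm, hs]
      rw [h4, add_comm]; exact habs _ _
  rcases hn with rfl | rfl
  · obtain ⟨e, he1, he2⟩ := hkey 0 1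
    refine ⟨!![s (A 0 0), 0; e, s (A 1 1)], ?_⟩
    ext i j
    simp only [mul_apply, transpose_apply, Fin.sum_univ_two]
    fin_cases i <;> fin_cases j <;> simp
    · rw [hs]
    · exact he1
    · rw [hsymm 1 0, he1, mul_comm]
    · rw [hs]; exact he2.symm
  · obtain ⟨e, he1, he2⟩ := hkey 0 1
    obtain ⟨f, hf1, hf2⟩ := hkey 1 2
    obtain ⟨g, hg1, hg2⟩ := hkey 2 0
    refine ⟨!![s (A 0 0), g, 0; e, 0, s (A 1 1); 0, s (A 2 2), f], ?_⟩
    ext i j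
    simp only [mul_apply, transpose_apply, Fin.sum_univ_three]
    fin_cases i <;> fin_cases j <;> simp
    · rw [hs]
      calc A 0 0 = g * g + A 0 0 := hg2.symm
        _ = A 0 0 + g * g := add_comm _ _
    · exact he1
    · rw [hsymm 0 2, hg1, mul_comm]
    · rw [hsymm 1 0, he1, mul_comm]
    · rw [hs]; exact he2.symm
    · exact hf1
    · exact hg1
    · rw [hsymm 2 1, hf1, mul_comm]
    · rw [hs]
      calc A 2 2 = f * f + A 2 2 := hf2.symm
        _ = A 2 2 + f * f := add_comm _ _
end

section
/- Let L be a totally ordered normal incline and let A be an n×n completely positive matrix over L (A = B * Bᵀ for some n×m matrix B over L). Then the CP-rank of A is at most max{n, ⌊n²/4⌋}: there exist k ≤ max{n, ⌊n²/4⌋} and an n×k matrix B' over L with A = B' * B'ᵀ. (This is the incline analogue of the Drew–Johnson–Loewy bound.) -/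
namespace Stmt10Aux

variable {L : Type*} [CommSemiring L]

/-- The incline order. -/
def le' (x y : L) : Prop := x + y = y

lemma le'_refl (hidem : ∀ a : L, a + a = a) (x : L) : le' x x := hidem x

lemma le'_trans {x y z : L} (h1 : le' x y) (h2 : le' y z) : le' x z := by
  unfold le' at *
  rw [← h2, ← add_assoc, h1]

lemma zero_le' (x : L) : le' 0 x := zero_add x

lemma le'_zero {x : L} (h : le' x 0) : x = 0 := by
  unfold le' at h; rwa [add_zero] at h

lemma mul_le'_mul {x y z w : L} (h1 : le' x y) (h2 : le' z w) :
    le' (x * z) (y * w) := by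
  have s1 : le' (x * z) (y * z) := by
    unfold le' at *; rw [← add_mul, h1]
  have s2 : le' (y * z) (y * w) := by
    unfold le' at *; rw [← mul_add, h2]
  exact le'_trans s1 s2

lemma le'_mul_left (habs : ∀ a b : L, a + a * b = a) (a b : L) : le' (a * b) a := by
  unfold le'; rw [add_comm]; exact habs a b

lemma le'_mul_right (habs : ∀ a b : L, a + a * b = a) (a b : L) : le' (a * b) b := by
  rw [mul_comm]; exact le'_mul_left habs b a

lemma add_le' {a b c : L} (h1 : le' a c) (h2 : le' b c) : le' (a + b) c := by
  unfold le' at *; rw [add_assoc, h2, h1]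

lemma le'_add_left (hidem : ∀ a : L, a + a = a) (a x : L) : le' a (a + x) := by
  unfold le'; rw [← add_assoc, hidem]

/-- sum of elements all `≤' v` is `≤' v`. -/
lemma sum_le' {ι : Type*} (s : Finset ι) (f : ι → L) (v : L)
    (h : ∀ i ∈ s, le' (f i) v) : le' (∑ i ∈ s, f i) v := by
  classical
  induction s using Finset.induction_on with
  | empty => simpa using zero_le' v
  | insert _ _ hx ih =>
    rw [Finset.sum_insert hx]
    exact add_le' (h _ (Finset.mem_insert_self _ _))
      (ih fun i hi => h i (Finset.mem_insert_of_mem hi))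

lemma sum_eq' {ι : Type*} (s : Finset ι) (f : ι → L) (v : L)
    (hall : ∀ i ∈ s, le' (f i) v)
    (hw : v = 0 ∨ ∃ i ∈ s, f i = v) : ∑ i ∈ s, f i = v := by
  classical
  rcases hw with rfl | ⟨i0, hi0, hfi0⟩
  · exact Finset.sum_eq_zero fun i hi => le'_zero (hall i hi)
  · have hs : le' (∑ i ∈ s, f i) v := sum_le' s f v hall
    have hsplit : f i0 + ∑ i ∈ s.erase i0, f i = ∑ i ∈ s, f i :=
      Finset.add_sum_erase s f hi0
    have hrest : le' (∑ i ∈ s.erase i0, f i) v :=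
      sum_le' _ f v fun i hi => hall i (Finset.mem_of_mem_erase hi)
    -- ∑ = f i0 + rest = v + rest = rest + v = v
    have : (∑ i ∈ s, f i) = v + ∑ i ∈ s.erase i0, f i := by
      rw [← hsplit, hfi0]
    rw [this, add_comm]
    exact hrest

/-- existence of a maximum for `le'` over a nonempty finite set. -/
lemma exists_max_le' (hidem : ∀ a : L, a + a = a) (htot : ∀ x y : L, x + y = y ∨ y + x = x)
    {β : Type*} (s : Finset β) (hs : s.Nonempty) (f : β → L) :
    ∃ a ∈ s, ∀ b ∈ s, le' (f b) (f a) := by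
  classical
  induction s using Finset.induction_on with
  | empty => exact absurd hs (by simp)
  | @insert a t ha ih =>
    rcases t.eq_empty_or_nonempty with rfl | ht
    · exact ⟨a, by simp, by intro b hb; simp at hb; subst hb; exact le'_refl hidem _⟩
    · obtain ⟨m, hm, hmax⟩ := ih ht
      rcases htot (f a) (f m) with h | h
      · refine ⟨m, Finset.mem_insert_of_mem hm, ?_⟩
        intro b hb
        rcases Finset.mem_insert.1 hb with rfl | hb
        · exact h
        · exact hmax b hb
      · refine ⟨a, Finset.mem_insert_self _ _, ?_⟩
        intro b hb
        rcases Finset.mem_insert.1 hb with rfl | hb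
        · exact le'_refl hidem _
        · exact le'_trans (hmax b hb) h

lemma single_le'_sum (hidem : ∀ a : L, a + a = a) {ι : Type*} (s : Finset ι) (f : ι → L)
    {k : ι} (hk : k ∈ s) : le' (f k) (∑ i ∈ s, f i) := by
  classical
  rw [← Finset.add_sum_erase s f hk]
  exact le'_add_left hidem _ _

section sqrt

variable (Sq : L → L) (hSq : ∀ x, Sq x * Sq x = x) (hSqU : ∀ c x : L, c * c = x → c = Sq x)

include hSqU in
lemma sq_inj {s t : L} (h : s * s = t * t) : s = t := by
  rw [hSqU s (t * t) h]; exact (hSqU t (t * t) rfl).symm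

include Sq hSqU in
lemma sq_le' (hidem : ∀ a : L, a + a = a)
    (hAG : ∀ x y : L, x * y + (x * x + y * y) = x * x + y * y)
    {s t : L} (h : le' (s * s) (t * t)) : le' s t := by
  have e1 : (s + t) * (s + t) = s * s + (s * t + s * t) + t * t := by ring
  rw [hidem (s * t)] at e1
  have key : (s + t) * (s + t) = t * t := by
    rw [e1]
    calc s * s + s * t + t * t = s * t + (s * s + t * t) := by ring
      _ = s * s + t * t := hAG s t
      _ = t * t := h
  exact sq_inj Sq hSqU key

end sqrt

/-- floor identity -/
lemma qid (k : ℕ) : (k + 2) ^ 2 / 4 = k ^ 2 / 4 + (k + 1) := by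
  have h : (k + 2) ^ 2 = k ^ 2 + (k + 1) * 4 := by ring
  rw [h, Nat.add_mul_div_right _ _ (by norm_num)]

lemma le_q4 {m : ℕ} (h : 4 ≤ m) : m ≤ m ^ 2 / 4 := by
  rw [Nat.le_div_iff_mul_le (by norm_num)]
  calc m * 4 ≤ m * m := Nat.mul_le_mul_left m h
    _ = m ^ 2 := (sq m).symm


/-! ### Columns -/

section cols

variable {n : ℕ} (A W : Fin n → Fin n → L) (Sq : L → L)

def dCol (i : Fin n) : Fin n → L := fun p => if p = i then Sq (A i i) else 0

def eCol (x y : Fin n) : Fin n → L := fun p =>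
  if p = x then Sq (A x x) else if p = y then Sq (A y y) * Sq (W x y) else 0

def cCol (j i k : Fin n) : Fin n → L := fun p =>
  if p = j then Sq (A j j)
  else if p = i then Sq (A i i) * Sq (W i j)
  else if p = k then Sq (A k k) * Sq (W k j) else 0

variable (hidem : ∀ a : L, a + a = a) (habs : ∀ a b : L, a + a * b = a)
  (hAG : ∀ x y : L, x * y + (x * x + y * y) = x * x + y * y)
  (hSq : ∀ x, Sq x * Sq x = x) (hSqU : ∀ c x : L, c * c = x → c = Sq x)
  (hsymm : ∀ x y, A x y = A y x)
  (hW : ∀ x y, A x y * A x y = (A x x * A y y) * W x y)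

include hSq hSqU hW in
lemma evalSq (x y : Fin n) : Sq (A x x) * (Sq (A y y) * Sq (W x y)) = A x y := by
  apply sq_inj Sq hSqU
  calc (Sq (A x x) * (Sq (A y y) * Sq (W x y))) * (Sq (A x x) * (Sq (A y y) * Sq (W x y)))
      = (Sq (A x x) * Sq (A x x)) * ((Sq (A y y) * Sq (A y y)) * (Sq (W x y) * Sq (W x y))) := by
        ring
    _ = A x x * (A y y * W x y) := by rw [hSq, hSq, hSq]
    _ = (A x x * A y y) * W x y := (mul_assoc _ _ _).symm
    _ = A x y * A x y := (hW x y).symm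

include habs hSq in
lemma partialDiag (y : Fin n) (w : L) :
    le' ((Sq (A y y) * Sq w) * (Sq (A y y) * Sq w)) (A y y) := by
  have e : (Sq (A y y) * Sq w) * (Sq (A y y) * Sq w) = A y y * w := by
    calc (Sq (A y y) * Sq w) * (Sq (A y y) * Sq w)
        = (Sq (A y y) * Sq (A y y)) * (Sq w * Sq w) := by ring
      _ = A y y * w := by rw [hSq, hSq]
  rw [e]; exact le'_mul_left habs _ _

set_option linter.unusedSectionVars false

lemma eCol_at1 (x y : Fin n) : eCol A W Sq x y x = Sq (A x x) := by
  unfold eCol; simp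

lemma eCol_at2 (x y : Fin n) (hxy : x ≠ y) :
    eCol A W Sq x y y = Sq (A y y) * Sq (W x y) := by
  unfold eCol; simp [Ne.symm hxy]

lemma eCol_at0 (x y p : Fin n) (h1 : p ≠ x) (h2 : p ≠ y) : eCol A W Sq x y p = 0 := by
  unfold eCol; simp [h1, h2]

lemma cCol_atj (j i k : Fin n) : cCol A W Sq j i k j = Sq (A j j) := by
  unfold cCol; simp

lemma cCol_ati (j i k : Fin n) (hji : j ≠ i) :
    cCol A W Sq j i k i = Sq (A i i) * Sq (W i j) := by
  unfold cCol; simp [Ne.symm hji]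

lemma cCol_atk (j i k : Fin n) (hjk : j ≠ k) (hik : i ≠ k) :
    cCol A W Sq j i k k = Sq (A k k) * Sq (W k j) := by
  unfold cCol; simp [Ne.symm hjk, Ne.symm hik]

lemma cCol_at0 (j i k p : Fin n) (h1 : p ≠ j) (h2 : p ≠ i) (h3 : p ≠ k) :
    cCol A W Sq j i k p = 0 := by
  unfold cCol; simp [h1, h2, h3]

include hidem hSq in
lemma dCol_subA (i : Fin n) (p q : Fin n) :
    le' (dCol A Sq i p * dCol A Sq i q) (A p q) := by
  unfold dCol
  rcases eq_or_ne p i with h | hp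
  · rw [h]
    rcases eq_or_ne q i with h' | hq
    · rw [h', if_pos rfl, hSq]; exact le'_refl hidem _
    · rw [if_pos rfl, if_neg hq, mul_zero]; exact zero_le' _
  · rw [if_neg hp, zero_mul]; exact zero_le' _

include hidem habs hSq hSqU hsymm hW in
lemma eCol_subA (x y : Fin n) (hxy : x ≠ y) (p q : Fin n) :
    le' (eCol A W Sq x y p * eCol A W Sq x y q) (A p q) := by
  rcases eq_or_ne p x with h | hpx
  · rw [h]
    rcases eq_or_ne q x with h' | hqx
    · rw [h', eCol_at1, hSq]; exact le'_refl hidem _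
    · rcases eq_or_ne q y with h' | hqy
      · rw [h', eCol_at1, eCol_at2 A W Sq x y hxy, evalSq A W Sq hSq hSqU hW]
        exact le'_refl hidem _
      · rw [eCol_at0 A W Sq x y q hqx hqy, mul_zero]; exact zero_le' _
  · rcases eq_or_ne p y with h | hpy
    · rw [h]
      rcases eq_or_ne q x with h' | hqx
      · rw [h', eCol_at1, eCol_at2 A W Sq x y hxy, mul_comm,
          evalSq A W Sq hSq hSqU hW, hsymm]
        exact le'_refl hidem _
      · rcases eq_or_ne q y with h' | hqy
        · rw [h', eCol_at2 A W Sq x y hxy]; exact partialDiag A Sq habs hSq y (W x y)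
        · rw [eCol_at0 A W Sq x y q hqx hqy, mul_zero]; exact zero_le' _
    · rw [eCol_at0 A W Sq x y p hpx hpy, zero_mul]; exact zero_le' _

include hidem habs hAG hSq hSqU hsymm hW in
lemma cCol_subA (j i k : Fin n) (hji : j ≠ i) (hjk : j ≠ k) (hik : i ≠ k)
    (hcond : le' (W i j * W k j) (W i k)) (p q : Fin n) :
    le' (cCol A W Sq j i k p * cCol A W Sq j i k q) (A p q) := by
  have hcross : le' ((Sq (A i i) * Sq (W i j)) * (Sq (A k k) * Sq (W k j))) (A i k) := by
    apply sq_le' Sq hSqU hidem hAG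
    have e : ((Sq (A i i) * Sq (W i j)) * (Sq (A k k) * Sq (W k j)))
        * ((Sq (A i i) * Sq (W i j)) * (Sq (A k k) * Sq (W k j)))
        = (A i i * A k k) * (W i j * W k j) := by
      calc ((Sq (A i i) * Sq (W i j)) * (Sq (A k k) * Sq (W k j)))
          * ((Sq (A i i) * Sq (W i j)) * (Sq (A k k) * Sq (W k j)))
          = (Sq (A i i) * Sq (A i i)) * ((Sq (A k k) * Sq (A k k))
            * ((Sq (W i j) * Sq (W i j)) * (Sq (W k j) * Sq (W k j)))) := by ring
        _ = A i i * (A k k * (W i j * W k j)) := by rw [hSq, hSq, hSq, hSq]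
        _ = (A i i * A k k) * (W i j * W k j) := by ring
    rw [e, hW i k]
    exact mul_le'_mul (le'_refl hidem (A i i * A k k)) hcond
  have hej : Sq (A i i) * Sq (W i j) * Sq (A j j) = A i j := by
    calc Sq (A i i) * Sq (W i j) * Sq (A j j)
        = Sq (A i i) * (Sq (A j j) * Sq (W i j)) := by ring
      _ = A i j := evalSq A W Sq hSq hSqU hW i j
  have hek : Sq (A k k) * Sq (W k j) * Sq (A j j) = A k j := by
    calc Sq (A k k) * Sq (W k j) * Sq (A j j)
        = Sq (A k k) * (Sq (A j j) * Sq (W k j)) := by ring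
      _ = A k j := evalSq A W Sq hSq hSqU hW k j
  rcases eq_or_ne p j with h | hpj
  · rw [h]
    rcases eq_or_ne q j with h' | hqj
    · rw [h', cCol_atj, hSq]; exact le'_refl hidem _
    · rcases eq_or_ne q i with h' | hqi
      · rw [h', cCol_atj, cCol_ati A W Sq j i k hji, mul_comm, hej, hsymm]
        exact le'_refl hidem _
      · rcases eq_or_ne q k with h' | hqk
        · rw [h', cCol_atj, cCol_atk A W Sq j i k hjk hik, mul_comm, hek, hsymm]
          exact le'_refl hidem _
        · rw [cCol_at0 A W Sq j i k q hqj hqi hqk, mul_zero]; exact zero_le' _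
  · rcases eq_or_ne p i with h | hpi
    · rw [h]
      rcases eq_or_ne q j with h' | hqj
      · rw [h', cCol_atj, cCol_ati A W Sq j i k hji, hej]; exact le'_refl hidem _
      · rcases eq_or_ne q i with h' | hqi
        · rw [h', cCol_ati A W Sq j i k hji]; exact partialDiag A Sq habs hSq i (W i j)
        · rcases eq_or_ne q k with h' | hqk
          · rw [h', cCol_ati A W Sq j i k hji, cCol_atk A W Sq j i k hjk hik]
            exact hcross
          · rw [cCol_at0 A W Sq j i k q hqj hqi hqk, mul_zero]; exact zero_le' _
    · rcases eq_or_ne p k with h | hpk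
      · rw [h]
        rcases eq_or_ne q j with h' | hqj
        · rw [h', cCol_atj, cCol_atk A W Sq j i k hjk hik, hek]; exact le'_refl hidem _
        · rcases eq_or_ne q i with h' | hqi
          · rw [h', cCol_ati A W Sq j i k hji, cCol_atk A W Sq j i k hjk hik, mul_comm]
            exact le'_trans hcross (by rw [hsymm i k]; exact le'_refl hidem _)
          · rcases eq_or_ne q k with h' | hqk
            · rw [h', cCol_atk A W Sq j i k hjk hik]
              exact partialDiag A Sq habs hSq k (W k j)
            · rw [cCol_at0 A W Sq j i k q hqj hqi hqk, mul_zero]; exact zero_le' _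
      · rw [cCol_at0 A W Sq j i k p hpj hpi hpk, zero_mul]; exact zero_le' _

include hSq in
lemma dCol_diag (i : Fin n) : dCol A Sq i i * dCol A Sq i i = A i i := by
  unfold dCol; simp [hSq]

include hSq in
lemma eCol_diag (x y : Fin n) : eCol A W Sq x y x * eCol A W Sq x y x = A x x := by
  rw [eCol_at1, hSq]

include hSq hSqU hW in
lemma eCol_edge (x y : Fin n) (hxy : x ≠ y) :
    eCol A W Sq x y x * eCol A W Sq x y y = A x y := by
  rw [eCol_at1, eCol_at2 A W Sq x y hxy]
  exact evalSq A W Sq hSq hSqU hW x y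

include hSq in
lemma cCol_diag (j i k : Fin n) : cCol A W Sq j i k j * cCol A W Sq j i k j = A j j := by
  rw [cCol_atj, hSq]

include hSq hSqU hW in
lemma cCol_edge1 (j i k : Fin n) (hji : j ≠ i) (hjk : j ≠ k) (hik : i ≠ k) :
    cCol A W Sq j i k i * cCol A W Sq j i k j = A i j := by
  rw [cCol_atj, cCol_ati A W Sq j i k hji]
  calc Sq (A i i) * Sq (W i j) * Sq (A j j)
      = Sq (A i i) * (Sq (A j j) * Sq (W i j)) := by ring
    _ = A i j := evalSq A W Sq hSq hSqU hW i j

include hSq hSqU hW in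
lemma cCol_edge2 (j i k : Fin n) (hji : j ≠ i) (hjk : j ≠ k) (hik : i ≠ k) :
    cCol A W Sq j i k k * cCol A W Sq j i k j = A k j := by
  rw [cCol_atj, cCol_atk A W Sq j i k hjk hik]
  calc Sq (A k k) * Sq (W k j) * Sq (A j j)
      = Sq (A k k) * (Sq (A j j) * Sq (W k j)) := by ring
    _ = A k j := evalSq A W Sq hSq hSqU hW k j

end cols


/-! ### Assembly of step + recursion duties -/

section assemble

variable {n : ℕ} (A : Fin n → Fin n → L)

lemma wit_symm (hsymm : ∀ x y, A x y = A y x) {cs : List (Fin n → L)} {x y : Fin n}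
    (h : ∃ c ∈ cs, c x * c y = A x y) : ∃ c ∈ cs, c y * c x = A y x := by
  obtain ⟨c, hc, he⟩ := h
  exact ⟨c, hc, by rw [mul_comm, he, hsymm]⟩

lemma assemble (hsymm : ∀ x y, A x y = A y x)
    (R Δ R' Δ' : Finset (Fin n)) (u v : Fin n)
    (hchar : ∀ y, y ∈ R' ↔ y ∈ R ∧ y ≠ u ∧ y ≠ v)
    (step rec : List (Fin n → L))
    (hcuv : ∃ c ∈ step, c u * c v = A u v)
    (hcu : ∀ y ∈ R', A u y ≠ 0 → ∃ c ∈ step, c u * c y = A u y)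
    (hcv : ∀ y ∈ R', A v y ≠ 0 → ∃ c ∈ step, c v * c y = A v y)
    (hdg : ∀ i ∈ Δ, i ∉ Δ' → ∃ c ∈ step, c i * c i = A i i)
    (hrE : ∀ x ∈ R', ∀ y ∈ R', x ≠ y → A x y ≠ 0 → ∃ c ∈ rec, c x * c y = A x y)
    (hrD : ∀ i ∈ Δ', ∃ c ∈ rec, c i * c i = A i i) :
    (∀ x ∈ R, ∀ y ∈ R, x ≠ y → A x y ≠ 0 → ∃ c ∈ step ++ rec, c x * c y = A x y) ∧
    (∀ i ∈ Δ, ∃ c ∈ step ++ rec, c i * c i = A i i) := by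
  have stepIn : ∀ {c : Fin n → L}, c ∈ step → c ∈ step ++ rec := fun h =>
    List.mem_append_left _ h
  have recIn : ∀ {c : Fin n → L}, c ∈ rec → c ∈ step ++ rec := fun h =>
    List.mem_append_right _ h
  have lift : ∀ {x y : Fin n}, (∃ c ∈ step, c x * c y = A x y) →
      ∃ c ∈ step ++ rec, c x * c y = A x y := by
    rintro x y ⟨c, hc, he⟩; exact ⟨c, stepIn hc, he⟩
  have liftR : ∀ {x y : Fin n}, (∃ c ∈ rec, c x * c y = A x y) →
      ∃ c ∈ step ++ rec, c x * c y = A x y := by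
    rintro x y ⟨c, hc, he⟩; exact ⟨c, recIn hc, he⟩
  constructor
  · intro x hx y hy hne h0
    rcases eq_or_ne x u with rfl | hxu
    · rcases eq_or_ne y v with rfl | hyv
      · exact lift hcuv
      · have hy' : y ∈ R' := (hchar y).2 ⟨hy, Ne.symm hne, hyv⟩
        exact lift (hcu y hy' h0)
    · rcases eq_or_ne x v with rfl | hxv
      · rcases eq_or_ne y u with rfl | hyu
        · exact lift (wit_symm A hsymm hcuv)
        · have hy' : y ∈ R' := (hchar y).2 ⟨hy, hyu, Ne.symm hne⟩
          exact lift (hcv y hy' h0)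
      · have hx' : x ∈ R' := (hchar x).2 ⟨hx, hxu, hxv⟩
        rcases eq_or_ne y u with rfl | hyu
        · refine lift (wit_symm A hsymm (hcu x hx' ?_))
          rw [hsymm]; exact h0
        · rcases eq_or_ne y v with rfl | hyv
          · refine lift (wit_symm A hsymm (hcv x hx' ?_))
            rw [hsymm]; exact h0
          · have hy' : y ∈ R' := (hchar y).2 ⟨hy, hyu, hyv⟩
            exact liftR (hrE x hx' y hy' hne h0)
  · intro i hi
    by_cases h : i ∈ Δ'
    · exact liftR (hrD i h)
    · exact lift (hdg i hi h)

end assemble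


/-! ### The main covering lemma -/

section cover

variable {n : ℕ}

lemma cover
    (hidem : ∀ a : L, a + a = a) (habs : ∀ a b : L, a + a * b = a)
    (hAG : ∀ x y : L, x * y + (x * x + y * y) = x * x + y * y)
    (htot : ∀ x y : L, x + y = y ∨ y + x = x)
    (A W : Fin n → Fin n → L) (Sq : L → L)
    (hSq : ∀ x, Sq x * Sq x = x) (hSqU : ∀ c x : L, c * c = x → c = Sq x)
    (hsymm : ∀ x y, A x y = A y x)
    (hW : ∀ x y, A x y * A x y = (A x x * A y y) * W x y)
    (hWs : ∀ x y, W x y = W y x) :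
    ∀ (N : ℕ) (R Δ : Finset (Fin n)), R.card ≤ N → Δ ⊆ R →
    ∃ cs : List (Fin n → L),
      (∀ c ∈ cs, ∀ p q, le' (c p * c q) (A p q)) ∧
      cs.length ≤ max Δ.card (R.card ^ 2 / 4) ∧
      (∀ x ∈ R, ∀ y ∈ R, x ≠ y → A x y ≠ 0 → ∃ c ∈ cs, c x * c y = A x y) ∧
      (∀ i ∈ Δ, ∃ c ∈ cs, c i * c i = A i i) := by
  intro N
  induction N with
  | zero =>
    intro R Δ hRN hΔR
    have hRe : R = ∅ := Finset.card_eq_zero.1 (Nat.le_zero.1 hRN)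
    subst hRe
    have hΔe : Δ = ∅ := Finset.subset_empty.1 hΔR
    subst hΔe
    exact ⟨[], by simp, by simp, by simp, by simp⟩
  | succ N ih =>
    intro R Δ hRN hΔR
    classical
    set EP := (R ×ˢ R).filter (fun p => p.1 ≠ p.2 ∧ A p.1 p.2 ≠ 0) with hEP
    by_cases hE : ∃ p : Fin n × Fin n, p ∈ EP
    case neg =>
      refine ⟨Δ.toList.map (dCol A Sq), ?_, ?_, ?_, ?_⟩
      · intro c hc p q
        obtain ⟨i, _, rfl⟩ := List.mem_map.1 hc
        exact dCol_subA A Sq hidem hSq i p q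
      · rw [List.length_map, Finset.length_toList]
        exact le_max_left _ _
      · intro x hx y hy hne h0
        exact absurd ⟨(x, y), by simp [hEP, hx, hy, hne, h0]⟩ hE
      · intro i hi
        exact ⟨dCol A Sq i, List.mem_map.2 ⟨i, Finset.mem_toList.2 hi, rfl⟩,
          dCol_diag A Sq hSq i⟩
    case pos =>
      obtain ⟨p0, hp0⟩ := hE
      obtain ⟨⟨u, v⟩, hmemEP, hmax0⟩ :=
        exists_max_le' hidem htot EP ⟨p0, hp0⟩ (fun p => W p.1 p.2)
      have hmem' := Finset.mem_filter.1 hmemEP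
      have huR : u ∈ R := (Finset.mem_product.1 hmem'.1).1
      have hvR : v ∈ R := (Finset.mem_product.1 hmem'.1).2
      have huv : u ≠ v := hmem'.2.1
      have hAuv : A u v ≠ 0 := hmem'.2.2
      have hmaxW : ∀ x y : Fin n, x ∈ R → y ∈ R → x ≠ y → A x y ≠ 0 →
          le' (W x y) (W u v) := by
        intro x y hx hy hne h0
        exact hmax0 (x, y) (Finset.mem_filter.2 ⟨Finset.mem_product.2 ⟨hx, hy⟩, hne, h0⟩)
      set R' := (R.erase u).erase v with hR'def
      have hchar : ∀ y, y ∈ R' ↔ y ∈ R ∧ y ≠ u ∧ y ≠ v := by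
        intro y
        simp only [hR'def, Finset.mem_erase]
        tauto
      have cardR : R.card = R'.card + 2 := by
        have h1 : v ∈ R.erase u := Finset.mem_erase.2 ⟨Ne.symm huv, hvR⟩
        have e1 : (R.erase u).card + 1 = R.card := Finset.card_erase_add_one huR
        have e2 : R'.card + 1 = (R.erase u).card := Finset.card_erase_add_one h1
        omega
      have hR'N : R'.card ≤ N := by omega
      have hqid : R.card ^ 2 / 4 = R'.card ^ 2 / 4 + (R'.card + 1) := by
        rw [cardR]; exact qid _
      set Cm := R'.filter (fun w => A u w ≠ 0 ∧ A v w ≠ 0) with hCmdef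
      set Nu := R'.filter (fun w => A u w ≠ 0 ∧ A v w = 0) with hNudef
      set Nv := R'.filter (fun w => A u w = 0 ∧ A v w ≠ 0) with hNvdef
      have hCm : ∀ w ∈ Cm, w ∈ R' ∧ A u w ≠ 0 ∧ A v w ≠ 0 := by
        intro w hw; simpa [hCmdef] using Finset.mem_filter.1 hw
      have hNu : ∀ w ∈ Nu, w ∈ R' ∧ A u w ≠ 0 ∧ A v w = 0 := by
        intro w hw; simpa [hNudef] using Finset.mem_filter.1 hw
      have hNv : ∀ w ∈ Nv, w ∈ R' ∧ A u w = 0 ∧ A v w ≠ 0 := by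
        intro w hw; simpa [hNvdef] using Finset.mem_filter.1 hw
      have hclassu : ∀ y ∈ R', A u y ≠ 0 → y ∈ Cm ∨ y ∈ Nu := by
        intro y hy h0
        by_cases h : A v y = 0
        · exact Or.inr (Finset.mem_filter.2 ⟨hy, h0, h⟩)
        · exact Or.inl (Finset.mem_filter.2 ⟨hy, h0, h⟩)
      have hclassv : ∀ y ∈ R', A v y ≠ 0 → y ∈ Cm ∨ y ∈ Nv := by
        intro y hy h0
        by_cases h : A u y = 0
        · exact Or.inr (Finset.mem_filter.2 ⟨hy, h, h0⟩)
        · exact Or.inl (Finset.mem_filter.2 ⟨hy, h, h0⟩)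
      have hcondC : ∀ w ∈ Cm, le' (W u w * W v w) (W u v) := by
        intro w hw
        obtain ⟨hwR, h1, h2⟩ := hCm w hw
        have hwc := (hchar w).1 hwR
        exact le'_trans (le'_mul_left habs _ _)
          (hmaxW u w huR hwc.1 (Ne.symm hwc.2.1) h1)
      have hTR : Cm ∪ Nu ∪ Nv ⊆ R' := by
        refine Finset.union_subset (Finset.union_subset ?_ ?_) ?_ <;>
          exact Finset.filter_subset _ _
      have tcard : (Cm ∪ Nu ∪ Nv).card = Cm.card + Nu.card + Nv.card := by
        have d1 : Disjoint Cm Nu := by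
          rw [Finset.disjoint_left]
          intro a ha hb
          exact ((hCm a ha).2.2 (hNu a hb).2.2).elim
        have d2 : Disjoint (Cm ∪ Nu) Nv := by
          rw [Finset.disjoint_left]
          intro a ha hb
          rcases Finset.mem_union.1 ha with h | h
          · exact ((hCm a h).2.1 (hNv a hb).2.1).elim
          · exact ((hNu a h).2.1 (hNv a hb).2.1).elim
        rw [Finset.card_union_of_disjoint d2, Finset.card_union_of_disjoint d1]
      -- bulk columns
      have bulkProps : ∀ S1 S2 S3 : Finset (Fin n), S1 ⊆ Cm → S2 ⊆ Nu → S3 ⊆ Nv →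
          ∃ bs : List (Fin n → L),
            bs.length = S1.card + S2.card + S3.card ∧
            (∀ c ∈ bs, ∀ p q, le' (c p * c q) (A p q)) ∧
            (∀ w ∈ S1, (∃ c ∈ bs, c u * c w = A u w) ∧ (∃ c ∈ bs, c v * c w = A v w) ∧
              (∃ c ∈ bs, c w * c w = A w w)) ∧
            (∀ x ∈ S2, (∃ c ∈ bs, c u * c x = A u x) ∧ (∃ c ∈ bs, c x * c x = A x x)) ∧
            (∀ y ∈ S3, (∃ c ∈ bs, c v * c y = A v y) ∧ (∃ c ∈ bs, c y * c y = A y y)) := by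
        intro S1 S2 S3 h1 h2 h3
        have hS1 : ∀ w ∈ S1, w ≠ u ∧ w ≠ v ∧ A u w ≠ 0 ∧ A v w ≠ 0 ∧ w ∈ R' := by
          intro w hw
          obtain ⟨hwR, ha, hb⟩ := hCm w (h1 hw)
          have hwc := (hchar w).1 hwR
          exact ⟨hwc.2.1, hwc.2.2, ha, hb, hwR⟩
        have hS2 : ∀ x ∈ S2, x ≠ u ∧ x ≠ v := by
          intro x hx
          have hxc := (hchar x).1 (hNu x (h2 hx)).1
          exact ⟨hxc.2.1, hxc.2.2⟩
        have hS3 : ∀ y ∈ S3, y ≠ u ∧ y ≠ v := by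
          intro y hy
          have hyc := (hchar y).1 (hNv y (h3 hy)).1
          exact ⟨hyc.2.1, hyc.2.2⟩
        set bs := S1.toList.map (fun w => cCol A W Sq w u v) ++
          (S2.toList.map (fun x => eCol A W Sq x u) ++
           S3.toList.map (fun y => eCol A W Sq y v)) with hbs
        have m1 : ∀ w ∈ S1, cCol A W Sq w u v ∈ bs := by
          intro w hw; rw [hbs]
          exact List.mem_append_left _ (List.mem_map.2 ⟨w, Finset.mem_toList.2 hw, rfl⟩)
        have m2 : ∀ x ∈ S2, eCol A W Sq x u ∈ bs := by
          intro x hx; rw [hbs]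
          exact List.mem_append_right _ (List.mem_append_left _
            (List.mem_map.2 ⟨x, Finset.mem_toList.2 hx, rfl⟩))
        have m3 : ∀ y ∈ S3, eCol A W Sq y v ∈ bs := by
          intro y hy; rw [hbs]
          exact List.mem_append_right _ (List.mem_append_right _
            (List.mem_map.2 ⟨y, Finset.mem_toList.2 hy, rfl⟩))
        refine ⟨bs, ?_, ?_, ?_, ?_, ?_⟩
        · rw [hbs]
          simp only [List.length_append, List.length_map, Finset.length_toList]
          omega
        · intro c hc p q
          rw [hbs] at hc
          rcases List.mem_append.1 hc with hc | hc
          · obtain ⟨w, hw, rfl⟩ := List.mem_map.1 hc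
            have hw' := hS1 w (Finset.mem_toList.1 hw)
            exact cCol_subA A W Sq hidem habs hAG hSq hSqU hsymm hW w u v
              hw'.1 hw'.2.1 huv (hcondC w (h1 (Finset.mem_toList.1 hw))) p q
          · rcases List.mem_append.1 hc with hc | hc
            · obtain ⟨x, hx, rfl⟩ := List.mem_map.1 hc
              have hx' := hS2 x (Finset.mem_toList.1 hx)
              exact eCol_subA A W Sq hidem habs hSq hSqU hsymm hW x u hx'.1 p q
            · obtain ⟨y, hy, rfl⟩ := List.mem_map.1 hc
              have hy' := hS3 y (Finset.mem_toList.1 hy)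
              exact eCol_subA A W Sq hidem habs hSq hSqU hsymm hW y v hy'.2 p q
        · intro w hw
          have hw' := hS1 w hw
          have hmem := m1 w hw
          exact ⟨⟨_, hmem, cCol_edge1 A W Sq hSq hSqU hW w u v hw'.1 hw'.2.1 huv⟩,
            ⟨_, hmem, cCol_edge2 A W Sq hSq hSqU hW w u v hw'.1 hw'.2.1 huv⟩,
            ⟨_, hmem, cCol_diag A W Sq hSq w u v⟩⟩
        · intro x hx
          have hx' := hS2 x hx
          have hmem := m2 x hx
          refine ⟨⟨_, hmem, ?_⟩, ⟨_, hmem, eCol_diag A W Sq hSq x u⟩⟩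
          rw [mul_comm, eCol_edge A W Sq hSq hSqU hW x u hx'.1]
          exact hsymm x u
        · intro y hy
          have hy' := hS3 y hy
          have hmem := m3 y hy
          refine ⟨⟨_, hmem, ?_⟩, ⟨_, hmem, eCol_diag A W Sq hSq y v⟩⟩
          rw [mul_comm, eCol_edge A W Sq hSq hSqU hW y v hy'.2]
          exact hsymm y v
      -- the finishing move
      have finish : ∀ (step : List (Fin n → L)) (Tcov : Finset (Fin n)), Tcov ⊆ R' →
          (∀ c ∈ step, ∀ p q, le' (c p * c q) (A p q)) →
          (∃ c ∈ step, c u * c v = A u v) →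
          (∀ y ∈ R', A u y ≠ 0 → ∃ c ∈ step, c u * c y = A u y) →
          (∀ y ∈ R', A v y ≠ 0 → ∃ c ∈ step, c v * c y = A v y) →
          (∀ i ∈ Δ, i ∉ (Δ ∩ R') \ Tcov → ∃ c ∈ step, c i * c i = A i i) →
          (step.length + max ((Δ ∩ R') \ Tcov).card (R'.card ^ 2 / 4) ≤
            max Δ.card (R.card ^ 2 / 4)) →
          ∃ cs : List (Fin n → L),
            (∀ c ∈ cs, ∀ p q, le' (c p * c q) (A p q)) ∧
            cs.length ≤ max Δ.card (R.card ^ 2 / 4) ∧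
            (∀ x ∈ R, ∀ y ∈ R, x ≠ y → A x y ≠ 0 → ∃ c ∈ cs, c x * c y = A x y) ∧
            (∀ i ∈ Δ, ∃ c ∈ cs, c i * c i = A i i) := by
        intro step Tcov hTcovR hstepA hcuv hcu hcv hdg hcount
        set Δ' := (Δ ∩ R') \ Tcov with hΔ'def
        have hΔ'R' : Δ' ⊆ R' :=
          (Finset.sdiff_subset).trans Finset.inter_subset_right
        obtain ⟨rec, rsub, rlen, rE, rD⟩ := ih R' Δ' hR'N hΔ'R'
        have hdu := assemble A hsymm R Δ R' Δ' u v hchar step rec hcuv hcu hcv hdg rE rD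
        refine ⟨step ++ rec, ?_, ?_, hdu.1, hdu.2⟩
        · intro c hc p q
          rcases List.mem_append.1 hc with hc | hc
          · exact hstepA c hc p q
          · exact rsub c hc p q
        · rw [List.length_append]
          calc step.length + rec.length ≤
              step.length + max Δ'.card (R'.card ^ 2 / 4) := by omega
            _ ≤ max Δ.card (R.card ^ 2 / 4) := hcount
      -- common counting facts
      have hΔ'le : ∀ Tc : Finset (Fin n), Tc ⊆ R' →
          ((Δ ∩ R') \ Tc).card ≤ R'.card - Tc.card := by
        intro Tc hTc
        calc ((Δ ∩ R') \ Tc).card ≤ (R' \ Tc).card :=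
              Finset.card_le_card
                (Finset.sdiff_subset_sdiff Finset.inter_subset_right (le_refl _))
          _ = R'.card - Tc.card := Finset.card_sdiff_of_subset hTc
      have hTcard : (Cm ∪ Nu ∪ Nv).card ≤ R'.card := Finset.card_le_card hTR
      by_cases hvD : v ∈ Δ
      case neg =>
        -- M1 : core = eCol u v
        obtain ⟨bs, blen, bsub, bw1, bw2, bw3⟩ :=
          bulkProps Cm Nu Nv (le_refl _) (le_refl _) (le_refl _)
        set step := eCol A W Sq u v :: bs with hstepdef
        have hmemcore : eCol A W Sq u v ∈ step := List.mem_cons_self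
        have hlift : ∀ {c : Fin n → L}, c ∈ bs → c ∈ step := by
          intro c hc; exact List.mem_cons_of_mem _ hc
        apply finish step (Cm ∪ Nu ∪ Nv) hTR
        · intro c hc p q
          rcases List.mem_cons.1 hc with rfl | hc
          · exact eCol_subA A W Sq hidem habs hSq hSqU hsymm hW u v huv p q
          · exact bsub c hc p q
        · exact ⟨_, hmemcore, eCol_edge A W Sq hSq hSqU hW u v huv⟩
        · intro y hy h0
          rcases hclassu y hy h0 with h | h
          · obtain ⟨c, hc, he⟩ := (bw1 y h).1; exact ⟨c, hlift hc, he⟩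
          · obtain ⟨c, hc, he⟩ := (bw2 y h).1; exact ⟨c, hlift hc, he⟩
        · intro y hy h0
          rcases hclassv y hy h0 with h | h
          · obtain ⟨c, hc, he⟩ := (bw1 y h).2.1; exact ⟨c, hlift hc, he⟩
          · obtain ⟨c, hc, he⟩ := (bw3 y h).1; exact ⟨c, hlift hc, he⟩
        · intro i hiΔ hi'
          have hh : i ∉ R' ∨ i ∈ Cm ∪ Nu ∪ Nv := by
            by_contra hcon
            push_neg at hcon
            exact hi' (Finset.mem_sdiff.2 ⟨Finset.mem_inter.2 ⟨hiΔ, hcon.1⟩, hcon.2⟩)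
          rcases hh with h | h
          · have hiR : i ∈ R := hΔR hiΔ
            have hiuv : i = u ∨ i = v := by
              by_contra hcon; push_neg at hcon
              exact h ((hchar i).2 ⟨hiR, hcon.1, hcon.2⟩)
            rcases hiuv with h' | h'
            · rw [h']; exact ⟨_, hmemcore, eCol_diag A W Sq hSq u v⟩
            · exact absurd (h' ▸ hiΔ) hvD
          · rcases Finset.mem_union.1 h with h | h
            · rcases Finset.mem_union.1 h with h | h
              · obtain ⟨c, hc, he⟩ := (bw1 i h).2.2; exact ⟨c, hlift hc, he⟩
              · obtain ⟨c, hc, he⟩ := (bw2 i h).2; exact ⟨c, hlift hc, he⟩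
            · obtain ⟨c, hc, he⟩ := (bw3 i h).2; exact ⟨c, hlift hc, he⟩
        · have h1 : step.length = bs.length + 1 := by rw [hstepdef]; simp
          have h2 := hΔ'le (Cm ∪ Nu ∪ Nv) hTR
          omega
      case pos =>
      by_cases huD : u ∈ Δ
      case neg =>
        -- M1' : core = eCol v u
        obtain ⟨bs, blen, bsub, bw1, bw2, bw3⟩ :=
          bulkProps Cm Nu Nv (le_refl _) (le_refl _) (le_refl _)
        set step := eCol A W Sq v u :: bs with hstepdef
        have hmemcore : eCol A W Sq v u ∈ step := List.mem_cons_self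
        have hlift : ∀ {c : Fin n → L}, c ∈ bs → c ∈ step := by
          intro c hc; exact List.mem_cons_of_mem _ hc
        apply finish step (Cm ∪ Nu ∪ Nv) hTR
        · intro c hc p q
          rcases List.mem_cons.1 hc with rfl | hc
          · exact eCol_subA A W Sq hidem habs hSq hSqU hsymm hW v u (Ne.symm huv) p q
          · exact bsub c hc p q
        · refine ⟨_, hmemcore, ?_⟩
          rw [mul_comm, eCol_edge A W Sq hSq hSqU hW v u (Ne.symm huv)]
          exact hsymm v u
        · intro y hy h0
          rcases hclassu y hy h0 with h | h
          · obtain ⟨c, hc, he⟩ := (bw1 y h).1; exact ⟨c, hlift hc, he⟩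
          · obtain ⟨c, hc, he⟩ := (bw2 y h).1; exact ⟨c, hlift hc, he⟩
        · intro y hy h0
          rcases hclassv y hy h0 with h | h
          · obtain ⟨c, hc, he⟩ := (bw1 y h).2.1; exact ⟨c, hlift hc, he⟩
          · obtain ⟨c, hc, he⟩ := (bw3 y h).1; exact ⟨c, hlift hc, he⟩
        · intro i hiΔ hi'
          have hh : i ∉ R' ∨ i ∈ Cm ∪ Nu ∪ Nv := by
            by_contra hcon
            push_neg at hcon
            exact hi' (Finset.mem_sdiff.2 ⟨Finset.mem_inter.2 ⟨hiΔ, hcon.1⟩, hcon.2⟩)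
          rcases hh with h | h
          · have hiR : i ∈ R := hΔR hiΔ
            have hiuv : i = u ∨ i = v := by
              by_contra hcon; push_neg at hcon
              exact h ((hchar i).2 ⟨hiR, hcon.1, hcon.2⟩)
            rcases hiuv with h' | h'
            · exact absurd (h' ▸ hiΔ) huD
            · rw [h']; exact ⟨_, hmemcore, eCol_diag A W Sq hSq v u⟩
          · rcases Finset.mem_union.1 h with h | h
            · rcases Finset.mem_union.1 h with h | h
              · obtain ⟨c, hc, he⟩ := (bw1 i h).2.2; exact ⟨c, hlift hc, he⟩
              · obtain ⟨c, hc, he⟩ := (bw2 i h).2; exact ⟨c, hlift hc, he⟩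
            · obtain ⟨c, hc, he⟩ := (bw3 i h).2; exact ⟨c, hlift hc, he⟩
        · have h1 : step.length = bs.length + 1 := by rw [hstepdef]; simp
          have h2 := hΔ'le (Cm ∪ Nu ∪ Nv) hTR
          omega
      case pos =>
      -- both u, v ∈ Δ
      have hmb : R.card ≤ 3 ∨ R.card ≤ max Δ.card (R.card ^ 2 / 4) := by
        rcases le_or_gt 4 R.card with h4 | h4
        · exact Or.inr (le_trans (le_q4 h4) (le_max_right _ _))
        · exact Or.inl (by omega)
      rcases Nv.eq_empty_or_nonempty with hNvE | ⟨y₁, hy₁⟩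
      case inr =>
        -- M2 : defer y₁ ∈ Nv
        obtain ⟨hy₁R, hAuy₁, hAvy₁⟩ := hNv y₁ hy₁
        have hy₁c := (hchar y₁).1 hy₁R
        obtain ⟨bs, blen, bsub, bw1, bw2, bw3⟩ :=
          bulkProps Cm Nu (Nv.erase y₁) (le_refl _) (le_refl _) (Finset.erase_subset _ _)
        have hy₁T : y₁ ∈ Cm ∪ Nu ∪ Nv := Finset.mem_union.2 (Or.inr hy₁)
        have hTcR : (Cm ∪ Nu ∪ Nv).erase y₁ ⊆ R' := (Finset.erase_subset _ _).trans hTR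
        set step := eCol A W Sq u v :: eCol A W Sq v y₁ :: bs with hstepdef
        have hmem1 : eCol A W Sq u v ∈ step := List.mem_cons_self
        have hmem2 : eCol A W Sq v y₁ ∈ step :=
          List.mem_cons_of_mem _ (List.mem_cons_self)
        have hlift : ∀ {c : Fin n → L}, c ∈ bs → c ∈ step := by
          intro c hc; exact List.mem_cons_of_mem _ (List.mem_cons_of_mem _ hc)
        apply finish step ((Cm ∪ Nu ∪ Nv).erase y₁) hTcR
        · intro c hc p q
          rcases List.mem_cons.1 hc with rfl | hc
          · exact eCol_subA A W Sq hidem habs hSq hSqU hsymm hW u v huv p q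
          rcases List.mem_cons.1 hc with rfl | hc
          · exact eCol_subA A W Sq hidem habs hSq hSqU hsymm hW v y₁
              (Ne.symm hy₁c.2.2) p q
          · exact bsub c hc p q
        · exact ⟨_, hmem1, eCol_edge A W Sq hSq hSqU hW u v huv⟩
        · intro y hy h0
          rcases hclassu y hy h0 with h | h
          · obtain ⟨c, hc, he⟩ := (bw1 y h).1; exact ⟨c, hlift hc, he⟩
          · obtain ⟨c, hc, he⟩ := (bw2 y h).1; exact ⟨c, hlift hc, he⟩
        · intro y hy h0
          rcases hclassv y hy h0 with h | h
          · obtain ⟨c, hc, he⟩ := (bw1 y h).2.1; exact ⟨c, hlift hc, he⟩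
          · rcases eq_or_ne y y₁ with h' | h'
            · rw [h']
              exact ⟨_, hmem2, eCol_edge A W Sq hSq hSqU hW v y₁ (Ne.symm hy₁c.2.2)⟩
            · obtain ⟨c, hc, he⟩ := (bw3 y (Finset.mem_erase.2 ⟨h', h⟩)).1
              exact ⟨c, hlift hc, he⟩
        · intro i hiΔ hi'
          have hh : i ∉ R' ∨ i ∈ (Cm ∪ Nu ∪ Nv).erase y₁ := by
            by_contra hcon
            push_neg at hcon
            exact hi' (Finset.mem_sdiff.2 ⟨Finset.mem_inter.2 ⟨hiΔ, hcon.1⟩, hcon.2⟩)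
          rcases hh with h | h
          · have hiR : i ∈ R := hΔR hiΔ
            have hiuv : i = u ∨ i = v := by
              by_contra hcon; push_neg at hcon
              exact h ((hchar i).2 ⟨hiR, hcon.1, hcon.2⟩)
            rcases hiuv with h' | h'
            · rw [h']; exact ⟨_, hmem1, eCol_diag A W Sq hSq u v⟩
            · rw [h']; exact ⟨_, hmem2, eCol_diag A W Sq hSq v y₁⟩
          · obtain ⟨hne, h⟩ := Finset.mem_erase.1 h
            rcases Finset.mem_union.1 h with h | h
            · rcases Finset.mem_union.1 h with h | h
              · obtain ⟨c, hc, he⟩ := (bw1 i h).2.2; exact ⟨c, hlift hc, he⟩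
              · obtain ⟨c, hc, he⟩ := (bw2 i h).2; exact ⟨c, hlift hc, he⟩
            · obtain ⟨c, hc, he⟩ := (bw3 i (Finset.mem_erase.2 ⟨hne, h⟩)).2
              exact ⟨c, hlift hc, he⟩
        · -- counting M2
          have h1 : step.length = bs.length + 2 := by rw [hstepdef]; simp
          have h2 := hΔ'le ((Cm ∪ Nu ∪ Nv).erase y₁) hTcR
          have h3 : ((Cm ∪ Nu ∪ Nv).erase y₁).card + 1 = (Cm ∪ Nu ∪ Nv).card :=
            Finset.card_erase_add_one hy₁T
          have h4 : (Nv.erase y₁).card + 1 = Nv.card := Finset.card_erase_add_one hy₁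
          by_cases hy₁Δ : y₁ ∈ Δ
          · have hc3 : ({u, v, y₁} : Finset (Fin n)).card = 3 :=
              Finset.card_eq_three.2
                ⟨u, v, y₁, huv, Ne.symm hy₁c.2.1, Ne.symm hy₁c.2.2, rfl⟩
            have hsub3 : ({u, v, y₁} : Finset (Fin n)) ⊆ Δ := by
              intro z hz
              rcases Finset.mem_insert.1 hz with rfl | hz
              · exact huD
              rcases Finset.mem_insert.1 hz with rfl | hz
              · exact hvD
              · rw [Finset.mem_singleton.1 hz]; exact hy₁Δ
            have hΔ3 : 3 ≤ Δ.card := by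
              have := Finset.card_le_card hsub3
              omega
            omega
          · have hy₁Δ' : y₁ ∉ (Δ ∩ R') \ ((Cm ∪ Nu ∪ Nv).erase y₁) := by
              intro hmem
              exact hy₁Δ (Finset.mem_inter.1 (Finset.mem_sdiff.1 hmem).1).1
            have hy₁mem : y₁ ∈ R' \ ((Cm ∪ Nu ∪ Nv).erase y₁) :=
              Finset.mem_sdiff.2 ⟨hy₁R, Finset.notMem_erase _ _⟩
            have h5 : (Δ ∩ R') \ ((Cm ∪ Nu ∪ Nv).erase y₁) ⊆
                (R' \ ((Cm ∪ Nu ∪ Nv).erase y₁)).erase y₁ := by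
              refine Finset.subset_erase.2 ⟨?_, hy₁Δ'⟩
              exact Finset.sdiff_subset_sdiff Finset.inter_subset_right (le_refl _)
            have h6 : ((Δ ∩ R') \ ((Cm ∪ Nu ∪ Nv).erase y₁)).card ≤
                (R' \ ((Cm ∪ Nu ∪ Nv).erase y₁)).card - 1 := by
              have := Finset.card_le_card h5
              rw [Finset.card_erase_of_mem hy₁mem] at this
              exact this
            have h7 : (R' \ ((Cm ∪ Nu ∪ Nv).erase y₁)).card =
                R'.card - ((Cm ∪ Nu ∪ Nv).erase y₁).card := Finset.card_sdiff_of_subset hTcR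
            omega
      case inl =>
      rcases Nu.eq_empty_or_nonempty with hNuE | ⟨x₁, hx₁⟩
      case inr =>
        -- M2' : defer x₁ ∈ Nu
        obtain ⟨hx₁R, hAux₁, hAvx₁⟩ := hNu x₁ hx₁
        have hx₁c := (hchar x₁).1 hx₁R
        obtain ⟨bs, blen, bsub, bw1, bw2, bw3⟩ :=
          bulkProps Cm (Nu.erase x₁) Nv (le_refl _) (Finset.erase_subset _ _) (le_refl _)
        have hx₁T : x₁ ∈ Cm ∪ Nu ∪ Nv :=
          Finset.mem_union.2 (Or.inl (Finset.mem_union.2 (Or.inr hx₁)))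
        have hTcR : (Cm ∪ Nu ∪ Nv).erase x₁ ⊆ R' := (Finset.erase_subset _ _).trans hTR
        set step := eCol A W Sq v u :: eCol A W Sq u x₁ :: bs with hstepdef
        have hmem1 : eCol A W Sq v u ∈ step := List.mem_cons_self
        have hmem2 : eCol A W Sq u x₁ ∈ step :=
          List.mem_cons_of_mem _ (List.mem_cons_self)
        have hlift : ∀ {c : Fin n → L}, c ∈ bs → c ∈ step := by
          intro c hc; exact List.mem_cons_of_mem _ (List.mem_cons_of_mem _ hc)
        apply finish step ((Cm ∪ Nu ∪ Nv).erase x₁) hTcR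
        · intro c hc p q
          rcases List.mem_cons.1 hc with rfl | hc
          · exact eCol_subA A W Sq hidem habs hSq hSqU hsymm hW v u (Ne.symm huv) p q
          rcases List.mem_cons.1 hc with rfl | hc
          · exact eCol_subA A W Sq hidem habs hSq hSqU hsymm hW u x₁
              (Ne.symm hx₁c.2.1) p q
          · exact bsub c hc p q
        · refine ⟨_, hmem1, ?_⟩
          rw [mul_comm, eCol_edge A W Sq hSq hSqU hW v u (Ne.symm huv)]
          exact hsymm v u
        · intro y hy h0
          rcases hclassu y hy h0 with h | h
          · obtain ⟨c, hc, he⟩ := (bw1 y h).1; exact ⟨c, hlift hc, he⟩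
          · rcases eq_or_ne y x₁ with h' | h'
            · rw [h']
              exact ⟨_, hmem2, eCol_edge A W Sq hSq hSqU hW u x₁ (Ne.symm hx₁c.2.1)⟩
            · obtain ⟨c, hc, he⟩ := (bw2 y (Finset.mem_erase.2 ⟨h', h⟩)).1
              exact ⟨c, hlift hc, he⟩
        · intro y hy h0
          rcases hclassv y hy h0 with h | h
          · obtain ⟨c, hc, he⟩ := (bw1 y h).2.1; exact ⟨c, hlift hc, he⟩
          · obtain ⟨c, hc, he⟩ := (bw3 y h).1; exact ⟨c, hlift hc, he⟩
        · intro i hiΔ hi'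
          have hh : i ∉ R' ∨ i ∈ (Cm ∪ Nu ∪ Nv).erase x₁ := by
            by_contra hcon
            push_neg at hcon
            exact hi' (Finset.mem_sdiff.2 ⟨Finset.mem_inter.2 ⟨hiΔ, hcon.1⟩, hcon.2⟩)
          rcases hh with h | h
          · have hiR : i ∈ R := hΔR hiΔ
            have hiuv : i = u ∨ i = v := by
              by_contra hcon; push_neg at hcon
              exact h ((hchar i).2 ⟨hiR, hcon.1, hcon.2⟩)
            rcases hiuv with h' | h'
            · rw [h']; exact ⟨_, hmem2, eCol_diag A W Sq hSq u x₁⟩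
            · rw [h']; exact ⟨_, hmem1, eCol_diag A W Sq hSq v u⟩
          · obtain ⟨hne, h⟩ := Finset.mem_erase.1 h
            rcases Finset.mem_union.1 h with h | h
            · rcases Finset.mem_union.1 h with h | h
              · obtain ⟨c, hc, he⟩ := (bw1 i h).2.2; exact ⟨c, hlift hc, he⟩
              · obtain ⟨c, hc, he⟩ := (bw2 i (Finset.mem_erase.2 ⟨hne, h⟩)).2
                exact ⟨c, hlift hc, he⟩
            · obtain ⟨c, hc, he⟩ := (bw3 i h).2; exact ⟨c, hlift hc, he⟩
        · -- counting M2'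
          have h1 : step.length = bs.length + 2 := by rw [hstepdef]; simp
          have h2 := hΔ'le ((Cm ∪ Nu ∪ Nv).erase x₁) hTcR
          have h3 : ((Cm ∪ Nu ∪ Nv).erase x₁).card + 1 = (Cm ∪ Nu ∪ Nv).card :=
            Finset.card_erase_add_one hx₁T
          have h4 : (Nu.erase x₁).card + 1 = Nu.card := Finset.card_erase_add_one hx₁
          by_cases hx₁Δ : x₁ ∈ Δ
          · have hc3 : ({u, v, x₁} : Finset (Fin n)).card = 3 :=
              Finset.card_eq_three.2
                ⟨u, v, x₁, huv, Ne.symm hx₁c.2.1, Ne.symm hx₁c.2.2, rfl⟩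
            have hsub3 : ({u, v, x₁} : Finset (Fin n)) ⊆ Δ := by
              intro z hz
              rcases Finset.mem_insert.1 hz with rfl | hz
              · exact huD
              rcases Finset.mem_insert.1 hz with rfl | hz
              · exact hvD
              · rw [Finset.mem_singleton.1 hz]; exact hx₁Δ
            have hΔ3 : 3 ≤ Δ.card := by
              have := Finset.card_le_card hsub3
              omega
            omega
          · have hx₁Δ' : x₁ ∉ (Δ ∩ R') \ ((Cm ∪ Nu ∪ Nv).erase x₁) := by
              intro hmem
              exact hx₁Δ (Finset.mem_inter.1 (Finset.mem_sdiff.1 hmem).1).1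
            have hx₁mem : x₁ ∈ R' \ ((Cm ∪ Nu ∪ Nv).erase x₁) :=
              Finset.mem_sdiff.2 ⟨hx₁R, Finset.notMem_erase _ _⟩
            have h5 : (Δ ∩ R') \ ((Cm ∪ Nu ∪ Nv).erase x₁) ⊆
                (R' \ ((Cm ∪ Nu ∪ Nv).erase x₁)).erase x₁ := by
              refine Finset.subset_erase.2 ⟨?_, hx₁Δ'⟩
              exact Finset.sdiff_subset_sdiff Finset.inter_subset_right (le_refl _)
            have h6 : ((Δ ∩ R') \ ((Cm ∪ Nu ∪ Nv).erase x₁)).card ≤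
                (R' \ ((Cm ∪ Nu ∪ Nv).erase x₁)).card - 1 := by
              have := Finset.card_le_card h5
              rw [Finset.card_erase_of_mem hx₁mem] at this
              exact this
            have h7 : (R' \ ((Cm ∪ Nu ∪ Nv).erase x₁)).card =
                R'.card - ((Cm ∪ Nu ∪ Nv).erase x₁).card := Finset.card_sdiff_of_subset hTcR
            omega
      case inl =>
      rcases Cm.eq_empty_or_nonempty with hCmE | ⟨w₀, hw₀⟩
      case inr =>
        -- M3 : trick with w₀ ∈ Cm
        obtain ⟨hw₀R, hAuw₀, hAvw₀⟩ := hCm w₀ hw₀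
        have hw₀c := (hchar w₀).1 hw₀R
        obtain ⟨bs, blen, bsub, bw1, bw2, bw3⟩ :=
          bulkProps (Cm.erase w₀) Nu Nv (Finset.erase_subset _ _) (le_refl _) (le_refl _)
        have hw₀T : w₀ ∈ Cm ∪ Nu ∪ Nv :=
          Finset.mem_union.2 (Or.inl (Finset.mem_union.2 (Or.inl hw₀)))
        have hTcR : (Cm ∪ Nu ∪ Nv).erase w₀ ⊆ R' := (Finset.erase_subset _ _).trans hTR
        rcases htot (W u w₀) (W v w₀) with hcmp | hcmp
        · -- core = [eCol v w₀, cCol u v w₀]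
          have hcond : le' (W v u * W w₀ u) (W v w₀) := by
            have h0 := le'_mul_right habs (W v u) (W w₀ u)
            have h1 : le' (W w₀ u) (W v w₀) := by rw [hWs w₀ u]; exact hcmp
            exact le'_trans h0 h1
          set step := eCol A W Sq v w₀ :: cCol A W Sq u v w₀ :: bs with hstepdef
          have hmem1 : eCol A W Sq v w₀ ∈ step := List.mem_cons_self
          have hmem2 : cCol A W Sq u v w₀ ∈ step :=
            List.mem_cons_of_mem _ (List.mem_cons_self)
          have hlift : ∀ {c : Fin n → L}, c ∈ bs → c ∈ step := by
            intro c hc; exact List.mem_cons_of_mem _ (List.mem_cons_of_mem _ hc)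
          apply finish step ((Cm ∪ Nu ∪ Nv).erase w₀) hTcR
          · intro c hc p q
            rcases List.mem_cons.1 hc with rfl | hc
            · exact eCol_subA A W Sq hidem habs hSq hSqU hsymm hW v w₀
                (Ne.symm hw₀c.2.2) p q
            rcases List.mem_cons.1 hc with rfl | hc
            · exact cCol_subA A W Sq hidem habs hAG hSq hSqU hsymm hW u v w₀
                huv (Ne.symm hw₀c.2.1) (Ne.symm hw₀c.2.2) hcond p q
            · exact bsub c hc p q
          · refine ⟨_, hmem2, ?_⟩
            rw [mul_comm, cCol_edge1 A W Sq hSq hSqU hW u v w₀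
              huv (Ne.symm hw₀c.2.1) (Ne.symm hw₀c.2.2)]
            exact hsymm v u
          · intro y hy h0
            rcases hclassu y hy h0 with h | h
            · rcases eq_or_ne y w₀ with h' | h'
              · rw [h']
                refine ⟨_, hmem2, ?_⟩
                rw [mul_comm, cCol_edge2 A W Sq hSq hSqU hW u v w₀
                  huv (Ne.symm hw₀c.2.1) (Ne.symm hw₀c.2.2)]
                exact hsymm w₀ u
              · obtain ⟨c, hc, he⟩ := (bw1 y (Finset.mem_erase.2 ⟨h', h⟩)).1
                exact ⟨c, hlift hc, he⟩
            · rw [hNuE] at h; exact absurd h (Finset.notMem_empty _)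
          · intro y hy h0
            rcases hclassv y hy h0 with h | h
            · rcases eq_or_ne y w₀ with h' | h'
              · rw [h']
                exact ⟨_, hmem1, eCol_edge A W Sq hSq hSqU hW v w₀ (Ne.symm hw₀c.2.2)⟩
              · obtain ⟨c, hc, he⟩ := (bw1 y (Finset.mem_erase.2 ⟨h', h⟩)).2.1
                exact ⟨c, hlift hc, he⟩
            · rw [hNvE] at h; exact absurd h (Finset.notMem_empty _)
          · intro i hiΔ hi'
            have hh : i ∉ R' ∨ i ∈ (Cm ∪ Nu ∪ Nv).erase w₀ := by
              by_contra hcon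
              push_neg at hcon
              exact hi' (Finset.mem_sdiff.2 ⟨Finset.mem_inter.2 ⟨hiΔ, hcon.1⟩, hcon.2⟩)
            rcases hh with h | h
            · have hiR : i ∈ R := hΔR hiΔ
              have hiuv : i = u ∨ i = v := by
                by_contra hcon; push_neg at hcon
                exact h ((hchar i).2 ⟨hiR, hcon.1, hcon.2⟩)
              rcases hiuv with h' | h'
              · rw [h']; exact ⟨_, hmem2, cCol_diag A W Sq hSq u v w₀⟩
              · rw [h']; exact ⟨_, hmem1, eCol_diag A W Sq hSq v w₀⟩
            · obtain ⟨hne, h⟩ := Finset.mem_erase.1 h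
              rcases Finset.mem_union.1 h with h | h
              · rcases Finset.mem_union.1 h with h | h
                · obtain ⟨c, hc, he⟩ := (bw1 i (Finset.mem_erase.2 ⟨hne, h⟩)).2.2
                  exact ⟨c, hlift hc, he⟩
                · obtain ⟨c, hc, he⟩ := (bw2 i h).2; exact ⟨c, hlift hc, he⟩
              · obtain ⟨c, hc, he⟩ := (bw3 i h).2; exact ⟨c, hlift hc, he⟩
          · -- counting M3 branch 1
            have h1 : step.length = bs.length + 2 := by rw [hstepdef]; simp
            have h2 := hΔ'le ((Cm ∪ Nu ∪ Nv).erase w₀) hTcR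
            have h3 : ((Cm ∪ Nu ∪ Nv).erase w₀).card + 1 = (Cm ∪ Nu ∪ Nv).card :=
              Finset.card_erase_add_one hw₀T
            have h4 : (Cm.erase w₀).card + 1 = Cm.card := Finset.card_erase_add_one hw₀
            by_cases hw₀Δ : w₀ ∈ Δ
            · have hc3 : ({u, v, w₀} : Finset (Fin n)).card = 3 :=
                Finset.card_eq_three.2
                  ⟨u, v, w₀, huv, Ne.symm hw₀c.2.1, Ne.symm hw₀c.2.2, rfl⟩
              have hsub3 : ({u, v, w₀} : Finset (Fin n)) ⊆ Δ := by
                intro z hz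
                rcases Finset.mem_insert.1 hz with rfl | hz
                · exact huD
                rcases Finset.mem_insert.1 hz with rfl | hz
                · exact hvD
                · rw [Finset.mem_singleton.1 hz]; exact hw₀Δ
              have hΔ3 : 3 ≤ Δ.card := by
                have := Finset.card_le_card hsub3
                omega
              omega
            · have hw₀Δ' : w₀ ∉ (Δ ∩ R') \ ((Cm ∪ Nu ∪ Nv).erase w₀) := by
                intro hmem
                exact hw₀Δ (Finset.mem_inter.1 (Finset.mem_sdiff.1 hmem).1).1
              have hw₀mem : w₀ ∈ R' \ ((Cm ∪ Nu ∪ Nv).erase w₀) :=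
                Finset.mem_sdiff.2 ⟨hw₀R, Finset.notMem_erase _ _⟩
              have h5 : (Δ ∩ R') \ ((Cm ∪ Nu ∪ Nv).erase w₀) ⊆
                  (R' \ ((Cm ∪ Nu ∪ Nv).erase w₀)).erase w₀ := by
                refine Finset.subset_erase.2 ⟨?_, hw₀Δ'⟩
                exact Finset.sdiff_subset_sdiff Finset.inter_subset_right (le_refl _)
              have h6 : ((Δ ∩ R') \ ((Cm ∪ Nu ∪ Nv).erase w₀)).card ≤
                  (R' \ ((Cm ∪ Nu ∪ Nv).erase w₀)).card - 1 := by
                have := Finset.card_le_card h5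
                rw [Finset.card_erase_of_mem hw₀mem] at this
                exact this
              have h7 : (R' \ ((Cm ∪ Nu ∪ Nv).erase w₀)).card =
                  R'.card - ((Cm ∪ Nu ∪ Nv).erase w₀).card := Finset.card_sdiff_of_subset hTcR
              omega
        · -- core = [eCol u w₀, cCol v u w₀]
          have hcond : le' (W u v * W w₀ v) (W u w₀) := by
            have h0 := le'_mul_right habs (W u v) (W w₀ v)
            have h1 : le' (W w₀ v) (W u w₀) := by rw [hWs w₀ v]; exact hcmp
            exact le'_trans h0 h1
          set step := eCol A W Sq u w₀ :: cCol A W Sq v u w₀ :: bs with hstepdef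
          have hmem1 : eCol A W Sq u w₀ ∈ step := List.mem_cons_self
          have hmem2 : cCol A W Sq v u w₀ ∈ step :=
            List.mem_cons_of_mem _ (List.mem_cons_self)
          have hlift : ∀ {c : Fin n → L}, c ∈ bs → c ∈ step := by
            intro c hc; exact List.mem_cons_of_mem _ (List.mem_cons_of_mem _ hc)
          apply finish step ((Cm ∪ Nu ∪ Nv).erase w₀) hTcR
          · intro c hc p q
            rcases List.mem_cons.1 hc with rfl | hc
            · exact eCol_subA A W Sq hidem habs hSq hSqU hsymm hW u w₀
                (Ne.symm hw₀c.2.1) p q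
            rcases List.mem_cons.1 hc with rfl | hc
            · exact cCol_subA A W Sq hidem habs hAG hSq hSqU hsymm hW v u w₀
                (Ne.symm huv) (Ne.symm hw₀c.2.2) (Ne.symm hw₀c.2.1) hcond p q
            · exact bsub c hc p q
          · exact ⟨_, hmem2, cCol_edge1 A W Sq hSq hSqU hW v u w₀
              (Ne.symm huv) (Ne.symm hw₀c.2.2) (Ne.symm hw₀c.2.1)⟩
          · intro y hy h0
            rcases hclassu y hy h0 with h | h
            · rcases eq_or_ne y w₀ with h' | h'
              · rw [h']
                exact ⟨_, hmem1, eCol_edge A W Sq hSq hSqU hW u w₀ (Ne.symm hw₀c.2.1)⟩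
              · obtain ⟨c, hc, he⟩ := (bw1 y (Finset.mem_erase.2 ⟨h', h⟩)).1
                exact ⟨c, hlift hc, he⟩
            · rw [hNuE] at h; exact absurd h (Finset.notMem_empty _)
          · intro y hy h0
            rcases hclassv y hy h0 with h | h
            · rcases eq_or_ne y w₀ with h' | h'
              · rw [h']
                refine ⟨_, hmem2, ?_⟩
                rw [mul_comm, cCol_edge2 A W Sq hSq hSqU hW v u w₀
                  (Ne.symm huv) (Ne.symm hw₀c.2.2) (Ne.symm hw₀c.2.1)]
                exact hsymm w₀ v
              · obtain ⟨c, hc, he⟩ := (bw1 y (Finset.mem_erase.2 ⟨h', h⟩)).2.1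
                exact ⟨c, hlift hc, he⟩
            · rw [hNvE] at h; exact absurd h (Finset.notMem_empty _)
          · intro i hiΔ hi'
            have hh : i ∉ R' ∨ i ∈ (Cm ∪ Nu ∪ Nv).erase w₀ := by
              by_contra hcon
              push_neg at hcon
              exact hi' (Finset.mem_sdiff.2 ⟨Finset.mem_inter.2 ⟨hiΔ, hcon.1⟩, hcon.2⟩)
            rcases hh with h | h
            · have hiR : i ∈ R := hΔR hiΔ
              have hiuv : i = u ∨ i = v := by
                by_contra hcon; push_neg at hcon
                exact h ((hchar i).2 ⟨hiR, hcon.1, hcon.2⟩)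
              rcases hiuv with h' | h'
              · rw [h']; exact ⟨_, hmem1, eCol_diag A W Sq hSq u w₀⟩
              · rw [h']; exact ⟨_, hmem2, cCol_diag A W Sq hSq v u w₀⟩
            · obtain ⟨hne, h⟩ := Finset.mem_erase.1 h
              rcases Finset.mem_union.1 h with h | h
              · rcases Finset.mem_union.1 h with h | h
                · obtain ⟨c, hc, he⟩ := (bw1 i (Finset.mem_erase.2 ⟨hne, h⟩)).2.2
                  exact ⟨c, hlift hc, he⟩
                · obtain ⟨c, hc, he⟩ := (bw2 i h).2; exact ⟨c, hlift hc, he⟩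
              · obtain ⟨c, hc, he⟩ := (bw3 i h).2; exact ⟨c, hlift hc, he⟩
          · -- counting M3 branch 2
            have h1 : step.length = bs.length + 2 := by rw [hstepdef]; simp
            have h2 := hΔ'le ((Cm ∪ Nu ∪ Nv).erase w₀) hTcR
            have h3 : ((Cm ∪ Nu ∪ Nv).erase w₀).card + 1 = (Cm ∪ Nu ∪ Nv).card :=
              Finset.card_erase_add_one hw₀T
            have h4 : (Cm.erase w₀).card + 1 = Cm.card := Finset.card_erase_add_one hw₀
            by_cases hw₀Δ : w₀ ∈ Δ
            · have hc3 : ({u, v, w₀} : Finset (Fin n)).card = 3 :=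
                Finset.card_eq_three.2
                  ⟨u, v, w₀, huv, Ne.symm hw₀c.2.1, Ne.symm hw₀c.2.2, rfl⟩
              have hsub3 : ({u, v, w₀} : Finset (Fin n)) ⊆ Δ := by
                intro z hz
                rcases Finset.mem_insert.1 hz with rfl | hz
                · exact huD
                rcases Finset.mem_insert.1 hz with rfl | hz
                · exact hvD
                · rw [Finset.mem_singleton.1 hz]; exact hw₀Δ
              have hΔ3 : 3 ≤ Δ.card := by
                have := Finset.card_le_card hsub3
                omega
              omega
            · have hw₀Δ' : w₀ ∉ (Δ ∩ R') \ ((Cm ∪ Nu ∪ Nv).erase w₀) := by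
                intro hmem
                exact hw₀Δ (Finset.mem_inter.1 (Finset.mem_sdiff.1 hmem).1).1
              have hw₀mem : w₀ ∈ R' \ ((Cm ∪ Nu ∪ Nv).erase w₀) :=
                Finset.mem_sdiff.2 ⟨hw₀R, Finset.notMem_erase _ _⟩
              have h5 : (Δ ∩ R') \ ((Cm ∪ Nu ∪ Nv).erase w₀) ⊆
                  (R' \ ((Cm ∪ Nu ∪ Nv).erase w₀)).erase w₀ := by
                refine Finset.subset_erase.2 ⟨?_, hw₀Δ'⟩
                exact Finset.sdiff_subset_sdiff Finset.inter_subset_right (le_refl _)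
              have h6 : ((Δ ∩ R') \ ((Cm ∪ Nu ∪ Nv).erase w₀)).card ≤
                  (R' \ ((Cm ∪ Nu ∪ Nv).erase w₀)).card - 1 := by
                have := Finset.card_le_card h5
                rw [Finset.card_erase_of_mem hw₀mem] at this
                exact this
              have h7 : (R' \ ((Cm ∪ Nu ∪ Nv).erase w₀)).card =
                  R'.card - ((Cm ∪ Nu ∪ Nv).erase w₀).card := Finset.card_sdiff_of_subset hTcR
              omega
      case inl =>
        -- M4 : all of Cm, Nu, Nv empty
        set step := [eCol A W Sq u v, eCol A W Sq v u] with hstepdef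
        have hmem1 : eCol A W Sq u v ∈ step := List.mem_cons_self
        have hmem2 : eCol A W Sq v u ∈ step :=
          List.mem_cons_of_mem _ (List.mem_cons_self)
        apply finish step ∅ (Finset.empty_subset _)
        · intro c hc p q
          rcases List.mem_cons.1 hc with rfl | hc
          · exact eCol_subA A W Sq hidem habs hSq hSqU hsymm hW u v huv p q
          rcases List.mem_cons.1 hc with rfl | hc
          · exact eCol_subA A W Sq hidem habs hSq hSqU hsymm hW v u (Ne.symm huv) p q
          · exact absurd hc List.not_mem_nil
        · exact ⟨_, hmem1, eCol_edge A W Sq hSq hSqU hW u v huv⟩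
        · intro y hy h0
          rcases hclassu y hy h0 with h | h
          · rw [hCmE] at h; exact absurd h (Finset.notMem_empty _)
          · rw [hNuE] at h; exact absurd h (Finset.notMem_empty _)
        · intro y hy h0
          rcases hclassv y hy h0 with h | h
          · rw [hCmE] at h; exact absurd h (Finset.notMem_empty _)
          · rw [hNvE] at h; exact absurd h (Finset.notMem_empty _)
        · intro i hiΔ hi'
          have hh : i ∉ R' ∨ i ∈ (∅ : Finset (Fin n)) := by
            by_contra hcon
            push_neg at hcon
            exact hi' (Finset.mem_sdiff.2 ⟨Finset.mem_inter.2 ⟨hiΔ, hcon.1⟩, hcon.2⟩)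
          rcases hh with h | h
          · have hiR : i ∈ R := hΔR hiΔ
            have hiuv : i = u ∨ i = v := by
              by_contra hcon; push_neg at hcon
              exact h ((hchar i).2 ⟨hiR, hcon.1, hcon.2⟩)
            rcases hiuv with h' | h'
            · rw [h']; exact ⟨_, hmem1, eCol_diag A W Sq hSq u v⟩
            · rw [h']; exact ⟨_, hmem2, eCol_diag A W Sq hSq v u⟩
          · exact absurd h (Finset.notMem_empty _)
        · -- counting M4
          have h1 : step.length = 2 := by rw [hstepdef]; simp
          have hΔsub : (Δ ∩ R') \ (∅ : Finset (Fin n)) ⊆ (Δ.erase u).erase v := by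
            intro z hz
            have hz' := Finset.mem_sdiff.1 hz
            have hzΔ := (Finset.mem_inter.1 hz'.1).1
            have hzR' := (Finset.mem_inter.1 hz'.1).2
            have hzc := (hchar z).1 hzR'
            exact Finset.mem_erase.2 ⟨hzc.2.2, Finset.mem_erase.2 ⟨hzc.2.1, hzΔ⟩⟩
          have e1 : (Δ.erase u).card + 1 = Δ.card := Finset.card_erase_add_one huD
          have e2 : ((Δ.erase u).erase v).card + 1 = (Δ.erase u).card :=
            Finset.card_erase_add_one (Finset.mem_erase.2 ⟨Ne.symm huv, hvD⟩)
          have h2 : ((Δ ∩ R') \ (∅ : Finset (Fin n))).card ≤ ((Δ.erase u).erase v).card :=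
            Finset.card_le_card hΔsub
          rcases Nat.eq_zero_or_pos R'.card with h0 | h0
          · have hq'0 : R'.card ^ 2 / 4 = 0 := by rw [h0]; norm_num
            omega
          · omega

end cover


end Stmt10Aux

open Matrix

/-- (Incline Drew–Johnson–Loewy bound) Over a totally ordered
normal incline, every n×n completely positive matrix has CP-rank at most
max{n, ⌊n²/4⌋}. -/
theorem stmt_10 {L : Type*} [CommSemiring L]
    (hidem : ∀ a : L, a + a = a)
    (habs : ∀ a b : L, a + a * b = a)
    (hLI : ∀ x y : L, x + y = y → ∃ z : L, x = y * z)
    (hsq : ∀ x : L, ∃! c : L, c * c = x)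
    (hAG : ∀ x y : L, x * y + (x * x + y * y) = x * x + y * y)
    (htot : ∀ x y : L, x + y = y ∨ y + x = x)
    (n : ℕ) (A : Matrix (Fin n) (Fin n) L)
    (hcp : ∃ m : ℕ, ∃ B : Matrix (Fin n) (Fin m) L, A = B * Bᵀ) :
    ∃ k : ℕ, k ≤ max n (n ^ 2 / 4) ∧
      ∃ B' : Matrix (Fin n) (Fin k) L, A = B' * B'ᵀ := by
  classical
  obtain ⟨m, B, hB⟩ := hcp
  have hAdef : ∀ x y, A x y = ∑ k, B x k * B y k := by
    intro x y
    rw [hB, Matrix.mul_apply]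
    simp [Matrix.transpose_apply]
  have hsymm : ∀ x y, A x y = A y x := by
    intro x y
    rw [hAdef, hAdef]
    exact Finset.sum_congr rfl fun k _ => mul_comm _ _
  have hbound : ∀ x y, Stmt10Aux.le' (A x y * A x y) (A x x * A y y) := by
    intro x y
    rw [hAdef x y, Finset.sum_mul_sum]
    apply Stmt10Aux.sum_le'
    intro k _
    apply Stmt10Aux.sum_le'
    intro l _
    have e : (B x k * B y k) * (B x l * B y l) = (B x k * B x l) * (B y k * B y l) := by
      ring
    rw [e]
    have h1 : Stmt10Aux.le' (B x k * B x l) (A x x) := by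
      refine Stmt10Aux.le'_trans (hAG (B x k) (B x l)) ?_
      rw [hAdef x x]
      exact Stmt10Aux.add_le'
        (Stmt10Aux.single_le'_sum hidem Finset.univ (fun i => B x i * B x i)
          (Finset.mem_univ k))
        (Stmt10Aux.single_le'_sum hidem Finset.univ (fun i => B x i * B x i)
          (Finset.mem_univ l))
    have h2 : Stmt10Aux.le' (B y k * B y l) (A y y) := by
      refine Stmt10Aux.le'_trans (hAG (B y k) (B y l)) ?_
      rw [hAdef y y]
      exact Stmt10Aux.add_le'
        (Stmt10Aux.single_le'_sum hidem Finset.univ (fun i => B y i * B y i)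
          (Finset.mem_univ k))
        (Stmt10Aux.single_le'_sum hidem Finset.univ (fun i => B y i * B y i)
          (Finset.mem_univ l))
    exact Stmt10Aux.mul_le'_mul h1 h2
  -- square roots
  set Sq : L → L := fun x => (hsq x).choose with hSqdef
  have hSq : ∀ x, Sq x * Sq x = x := fun x => (hsq x).choose_spec.1
  have hSqU : ∀ c x : L, c * c = x → c = Sq x := fun c x h => (hsq x).choose_spec.2 c h
  -- witnesses
  have hWex : ∀ x y, ∃ z, A x y * A x y = (A x x * A y y) * z := fun x y =>
    hLI _ _ (hbound x y)
  choose W0 hW0 using hWex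
  set W : Fin n → Fin n → L := fun x y => if x ≤ y then W0 x y else W0 y x with hWdef
  have hWs : ∀ x y, W x y = W y x := by
    intro x y
    rcases lt_trichotomy x y with h | h | h
    · simp [hWdef, le_of_lt h, not_le.2 h]
    · subst h; rfl
    · simp [hWdef, le_of_lt h, not_le.2 h]
  have hWspec : ∀ x y, A x y * A x y = (A x x * A y y) * W x y := by
    intro x y
    by_cases h : x ≤ y
    · simp only [hWdef, if_pos h]; exact hW0 x y
    · simp only [hWdef, if_neg h]
      rw [hsymm x y, hW0 y x]
      ring
  obtain ⟨cs, csub, clen, cE, cD⟩ :=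
    Stmt10Aux.cover hidem habs hAG htot (fun x y => A x y) W Sq hSq hSqU hsymm hWspec hWs
      n Finset.univ Finset.univ (by simp) (subset_refl _)
  have clen' : cs.length ≤ max n (n ^ 2 / 4) := by simpa using clen
  set B' : Matrix (Fin n) (Fin cs.length) L :=
    Matrix.of (fun i (j : Fin cs.length) => cs.get j i) with hB'def
  have hmain : ∀ x y, (B' * B'ᵀ) x y = A x y := by
    intro x y
    rw [Matrix.mul_apply]
    simp only [hB'def, Matrix.transpose_apply, Matrix.of_apply]
    apply Stmt10Aux.sum_eq'
    · intro j _
      exact csub _ (List.get_mem cs j) x y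
    · by_cases hxy : x = y
      · subst hxy
        obtain ⟨c, hc, he⟩ := cD x (Finset.mem_univ x)
        obtain ⟨j, hj⟩ := List.mem_iff_get.1 hc
        exact Or.inr ⟨j, Finset.mem_univ j, by rw [hj]; exact he⟩
      · by_cases h0 : A x y = 0
        · exact Or.inl h0
        · obtain ⟨c, hc, he⟩ := cE x (Finset.mem_univ x) y (Finset.mem_univ y) hxy h0
          obtain ⟨j, hj⟩ := List.mem_iff_get.1 hc
          exact Or.inr ⟨j, Finset.mem_univ j, by rw [hj]; exact he⟩
  refine ⟨cs.length, clen', B', ?_⟩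
  ext x y
  exact (hmain x y).symm
end

section
/- Let L be a normal incline and let A be an n×n completely positive matrix over L with n ≥ 3. If either every left almost principal 2×2 submatrix of A satisfies A i k * A k j ≤ A i j * A k k (for all i < k, j < k, i ≠ j), or every right almost principal 2×2 submatrix of A satisfies A i l * A k i ≤ A i i * A k l (for all i < k, i < l, k ≠ l), then the CP-rank of A is at most n: there exists an n×n matrix B over L with A = B * Bᵀ. -/
open Matrix

namespace Stmt14

variable {L : Type*} [CommSemiring L]

/-- The incline order: `x ≤ y` iff `x + y = y`. -/
def sle (x y : L) : Prop := x + y = y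

theorem sle_refl (hidem : ∀ a : L, a + a = a) (a : L) : sle a a := hidem a

theorem sle_trans {a b c : L} (h1 : sle a b) (h2 : sle b c) : sle a c := by
  unfold sle at *
  calc a + c = a + (b + c) := by rw [h2]
    _ = (a + b) + c := by rw [add_assoc]
    _ = b + c := by rw [h1]
    _ = c := h2

theorem sle_antisymm {a b : L} (h1 : sle a b) (h2 : sle b a) : a = b := by
  unfold sle at *
  calc a = b + a := h2.symm
    _ = a + b := add_comm _ _
    _ = b := h1

theorem add_sle {a b c : L} (h1 : sle a c) (h2 : sle b c) : sle (a + b) c := by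
  unfold sle at *
  calc (a + b) + c = a + (b + c) := by rw [add_assoc]
    _ = a + c := by rw [h2]
    _ = c := h1

theorem sle_add_left (hidem : ∀ a : L, a + a = a) (a b : L) : sle a (a + b) := by
  unfold sle
  calc a + (a + b) = (a + a) + b := by rw [add_assoc]
    _ = a + b := by rw [hidem]

theorem sle_add_right (hidem : ∀ a : L, a + a = a) (a b : L) : sle b (a + b) := by
  unfold sle
  calc b + (a + b) = a + (b + b) := by ring
    _ = a + b := by rw [hidem]

theorem sle_mul_right {a b : L} (c : L) (h : sle a b) : sle (a * c) (b * c) := by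
  unfold sle at *
  calc a * c + b * c = (a + b) * c := by rw [add_mul]
    _ = b * c := by rw [h]

theorem sle_mul_left {a b : L} (c : L) (h : sle a b) : sle (c * a) (c * b) := by
  unfold sle at *
  calc c * a + c * b = c * (a + b) := by rw [mul_add]
    _ = c * b := by rw [h]

theorem sle_mul_mul {a b c d : L} (h1 : sle a b) (h2 : sle c d) : sle (a * c) (b * d) :=
  sle_trans (sle_mul_right c h1) (sle_mul_left b h2)

theorem mul_sle (habs : ∀ a b : L, a + a * b = a) (a b : L) : sle (a * b) a := by
  unfold sle
  calc a * b + a = a + a * b := add_comm _ _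
    _ = a := habs a b

theorem zero_sle (a : L) : sle 0 a := zero_add a

/-- Squaring is injective (from uniqueness of square roots). -/
theorem sq_inj (hsq : ∀ x : L, ∃! c : L, c * c = x) {a b : L} (h : a * a = b * b) : a = b := by
  obtain ⟨c, _, hu⟩ := hsq (b * b)
  have ha := hu a h
  have hb := hu b rfl
  rw [ha, hb]

/-- The square root function. -/
noncomputable def rt (hsq : ∀ x : L, ∃! c : L, c * c = x) (x : L) : L := (hsq x).choose

theorem rt_sq (hsq : ∀ x : L, ∃! c : L, c * c = x) (x : L) : rt hsq x * rt hsq x = x :=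
  (hsq x).choose_spec.1

/-- Order reflection of squaring: `a² ≤ b² → a ≤ b`. -/
theorem sle_of_sq (hidem : ∀ a : L, a + a = a)
    (hsq : ∀ x : L, ∃! c : L, c * c = x)
    (hAG : ∀ x y : L, x * y + (x * x + y * y) = x * x + y * y)
    {a b : L} (h : sle (a * a) (b * b)) : sle a b := by
  have hexp : (a + b) * (a + b) = a * b + (a * a + b * b) := by
    have h1 : (a + b) * (a + b) = (a * b + a * b) + (a * a + b * b) := by ring
    rw [hidem (a * b)] at h1
    exact h1
  have h2 : (a + b) * (a + b) = a * a + b * b := by rw [hexp, hAG]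
  have h3 : (a + b) * (a + b) = b * b := by rw [h2]; exact h
  exact sq_inj hsq h3

/-- KEY CANCELLATION: if `a ≤ D`, `b ≤ D` and `a*D ≤ b*D` then `a ≤ b`. -/
theorem canc (hLI : ∀ x y : L, x + y = y → ∃ z : L, x = y * z)
    (hsq : ∀ x : L, ∃! c : L, c * c = x)
    {a b D : L} (ha : sle a D) (hb : sle b D) (h : sle (a * D) (b * D)) : sle a b := by
  have hu : sle (a + b) D := add_sle ha hb
  obtain ⟨τ, hτ⟩ := hLI (a + b) D hu
  obtain ⟨β, hβ⟩ := hLI b D hb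
  have huD : (a + b) * D = b * D := by
    have h' : a * D + b * D = b * D := h
    calc (a + b) * D = a * D + b * D := by rw [add_mul]
      _ = b * D := h'
  have h1 : (a + b) * (a + b) = b * (a + b) := by
    calc (a + b) * (a + b) = (D * τ) * (a + b) := by rw [← hτ]
      _ = τ * ((a + b) * D) := by ring
      _ = τ * (b * D) := by rw [huD]
      _ = b * (D * τ) := by ring
      _ = b * (a + b) := by rw [← hτ]
  have h2 : b * b = b * (a + b) := by
    calc b * b = (D * β) * b := by rw [← hβ]
      _ = β * (b * D) := by ring
      _ = β * ((a + b) * D) := by rw [huD]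
      _ = (a + b) * (D * β) := by ring
      _ = (a + b) * b := by rw [← hβ]
      _ = b * (a + b) := by ring
  exact sq_inj hsq (h1.trans h2.symm)

/-- Division with a certificate bound. -/
theorem div_cert (hLI : ∀ x y : L, x + y = y → ∃ z : L, x = y * z)
    (habs : ∀ a b : L, a + a * b = a)
    {x y c : L} (h : sle x (y * c)) : ∃ z : L, sle z c ∧ y * z = x := by
  obtain ⟨e, he⟩ := hLI x (y * c) h
  refine ⟨c * e, mul_sle habs c e, ?_⟩
  rw [he]; ring

/-- Tested division: if `y * z₀ = x` and `x*N ≤ y*M`, there is `z ≤ z₀` with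
    `y*z = x` and `z*N ≤ M`. -/
theorem tested (hidem : ∀ a : L, a + a = a) (habs : ∀ a b : L, a + a * b = a)
    (hLI : ∀ x y : L, x + y = y → ∃ z : L, x = y * z)
    (hsq : ∀ x : L, ∃! c : L, c * c = x)
    {x y z₀ N M : L} (hz : y * z₀ = x) (hv : sle (x * N) (y * M)) :
    ∃ z : L, y * z = x ∧ sle z z₀ ∧ sle (z * N) M := by
  obtain ⟨ρ, hρ⟩ := hLI M (M + z₀ * N) (sle_add_left hidem M (z₀ * N))
  obtain ⟨κ, hκ⟩ := hLI x (x + (M + z₀ * N)) (sle_add_left hidem x (M + z₀ * N))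
  set N' : L := z₀ * N with hN'
  set D : L := x + (M + N') with hD
  have hxD : sle x D := sle_add_left hidem x (M + N')
  have hMD : sle M D := sle_trans (sle_add_left hidem M N') (sle_add_right hidem x (M + N'))
  have f1 : sle (x * N') (x * M) := by
    have h1 : x * N' = z₀ * (x * N) := by rw [hN']; ring
    have h2 : z₀ * (y * M) = x * M := by rw [← hz]; ring
    rw [h1, ← h2]
    exact sle_mul_left z₀ hv
  have hNρ : sle (N' * ρ) M := by
    unfold sle
    calc N' * ρ + M = N' * ρ + (M + N') * ρ := by rw [← hρ]
      _ = M * ρ + (N' * ρ + N' * ρ) := by ring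
      _ = M * ρ + N' * ρ := by rw [hidem]
      _ = (M + N') * ρ := by ring
      _ = M := hρ.symm
  have hκ' : x = x * κ + (M * κ + N' * κ) := by
    calc x = D * κ := hκ
      _ = x * κ + (M * κ + N' * κ) := by rw [hD]; ring
  have hN'κx : sle (N' * κ) x := by
    unfold sle
    calc N' * κ + x = N' * κ + (x * κ + (M * κ + N' * κ)) := by rw [← hκ']
      _ = x * κ + (M * κ + (N' * κ + N' * κ)) := by ring
      _ = x * κ + (M * κ + N' * κ) := by rw [hidem]
      _ = x := hκ'.symm
  have hgM : sle (N' * κ) M := by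
    have hgD : sle (N' * κ) D := sle_trans hN'κx hxD
    have key : sle ((N' * κ) * D) (M * D) := by
      have e1 : (N' * κ) * D = x * N' := by
        calc (N' * κ) * D = N' * (D * κ) := by ring
          _ = N' * x := by rw [← hκ]
          _ = x * N' := by ring
      rw [e1]
      exact sle_trans f1 (by rw [mul_comm x M]; exact sle_mul_left M hxD)
    exact canc hLI hsq hgD hMD key
  refine ⟨z₀ * (ρ + κ), ?_, ?_, ?_⟩
  · have hyz : y * (z₀ * (ρ + κ)) = x * ρ + x * κ := by
      calc y * (z₀ * (ρ + κ)) = (y * z₀) * (ρ + κ) := by ring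
        _ = x * (ρ + κ) := by rw [hz]
        _ = x * ρ + x * κ := by ring
    rw [hyz]
    have hWx : sle (x * ρ + x * κ) x := add_sle (mul_sle habs x ρ) (mul_sle habs x κ)
    have hxW : sle x (x * ρ + x * κ) := by
      have hWD : sle (x * ρ + x * κ) D := sle_trans hWx hxD
      have hρD : ρ * D = ρ * x + M := by
        calc ρ * D = ρ * x + (M + N') * ρ := by rw [hD]; ring
          _ = ρ * x + M := by rw [← hρ]
      have p1 : sle (x * x) ((x * ρ + x * κ) * D) := by
        have e : x * x = (x * κ) * D := by
          calc x * x = x * (D * κ) := by rw [← hκ]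
            _ = (x * κ) * D := by ring
        rw [e]
        exact sle_mul_right D (sle_add_right hidem (x * ρ) (x * κ))
      have p2 : sle (x * M) ((x * ρ + x * κ) * D) := by
        have e : (x * ρ) * D = x * ρ * x + x * M := by
          calc (x * ρ) * D = x * (ρ * D) := by ring
            _ = x * (ρ * x + M) := by rw [hρD]
            _ = x * ρ * x + x * M := by ring
        have h1 : sle (x * M) ((x * ρ) * D) := by
          unfold sle
          calc x * M + (x * ρ) * D = x * M + (x * ρ * x + x * M) := by rw [e]
            _ = x * ρ * x + (x * M + x * M) := by ring
            _ = x * ρ * x + x * M := by rw [hidem]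
            _ = (x * ρ) * D := e.symm
        exact sle_trans h1 (sle_mul_right D (sle_add_left hidem (x * ρ) (x * κ)))
      have p3 : sle (x * N') ((x * ρ + x * κ) * D) := sle_trans f1 p2
      have hxDW : sle (x * D) ((x * ρ + x * κ) * D) := by
        have e : x * D = x * x + (x * M + x * N') := by rw [hD]; ring
        rw [e]
        exact add_sle p1 (add_sle p2 p3)
      exact canc hLI hsq hxD hWD hxDW
    exact sle_antisymm hWx hxW
  · exact mul_sle habs z₀ (ρ + κ)
  · have e : (z₀ * (ρ + κ)) * N = N' * ρ + N' * κ := by rw [hN']; ring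
    rw [e]
    exact add_sle hNρ hgM

/-- Multi-test division. -/
theorem tested_multi (hidem : ∀ a : L, a + a = a) (habs : ∀ a b : L, a + a * b = a)
    (hLI : ∀ x y : L, x + y = y → ∃ z : L, x = y * z)
    (hsq : ∀ x : L, ∃! c : L, c * c = x)
    {ι : Type*} [DecidableEq ι] (T : Finset ι) (N M : ι → L) {x y z₀ : L}
    (hz : y * z₀ = x) (hv : ∀ j ∈ T, sle (x * N j) (y * M j)) :
    ∃ z : L, y * z = x ∧ sle z z₀ ∧ ∀ j ∈ T, sle (z * N j) (M j) := by
  induction T using Finset.induction_on with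
  | empty => exact ⟨z₀, hz, sle_refl hidem z₀, fun j hj => absurd hj (Finset.notMem_empty j)⟩
  | @insert a T' ha ih =>
      obtain ⟨z', hz', hle', ht'⟩ := ih (fun j hj => hv j (Finset.mem_insert_of_mem hj))
      obtain ⟨z, hz2, hle2, ht2⟩ :=
        tested hidem habs hLI hsq hz' (hv a (Finset.mem_insert_self a T'))
      refine ⟨z, hz2, sle_trans hle2 hle', fun j hjm => ?_⟩
      rcases Finset.mem_insert.mp hjm with h | h
      · subst h; exact ht2
      · exact sle_trans (sle_mul_right (N j) hle2) (ht' j h)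

/-- A finite sum is below a common bound of its terms. -/
theorem sum_sle {ι : Type*} (s : Finset ι) (f : ι → L) (a : L)
    (h : ∀ i ∈ s, sle (f i) a) : sle (∑ i ∈ s, f i) a := by
  classical
  induction s using Finset.induction_on with
  | empty => simpa using zero_sle a
  | @insert b s' hb ih =>
      rw [Finset.sum_insert hb]
      exact add_sle (h b (Finset.mem_insert_self b s'))
        (ih (fun i hi => h i (Finset.mem_insert_of_mem hi)))

/-- An element below one term is below the whole sum. -/
theorem sle_sum (hidem : ∀ a : L, a + a = a) {ι : Type*} [DecidableEq ι]
    (s : Finset ι) (f : ι → L) {i₀ : ι} (hm : i₀ ∈ s) {a : L} (ha : sle a (f i₀)) :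
    sle a (∑ i ∈ s, f i) := by
  have h : ∑ i ∈ s, f i = f i₀ + ∑ i ∈ s.erase i₀, f i := (Finset.add_sum_erase s f hm).symm
  rw [h]
  exact sle_trans ha (sle_add_left hidem _ _)

/-- Two-phase construction of a compatible family of quotients. -/
theorem family (hidem : ∀ a : L, a + a = a) (habs : ∀ a b : L, a + a * b = a)
    (hLI : ∀ x y : L, x + y = y → ∃ z : L, x = y * z)
    (hsq : ∀ x : L, ∃! c : L, c * c = x)
    {n : ℕ} (S : Finset (Fin n)) (y : L) (x : Fin n → L) (c : Fin n → Fin n → L)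
    (e : Fin n → L)
    (hcsym : ∀ i j, c i j = c j i)
    (hcert : ∀ i ∈ S, sle (x i) (y * e i))
    (hV : ∀ i ∈ S, ∀ j ∈ S, i ≠ j → sle (x i * x j) (y * (y * c i j))) :
    ∃ w : Fin n → L, ∀ i ∈ S, (y * w i = x i) ∧ sle (w i) (e i) ∧
      ∀ j ∈ S, i ≠ j → sle (w i * w j) (c i j) := by
  classical
  have P1 : ∀ i : Fin n, ∃ v : L, i ∈ S →
      (y * v = x i ∧ sle v (e i) ∧ ∀ j ∈ S, i ≠ j → sle (v * x j) (y * c i j)) := by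
    intro i
    by_cases hi : i ∈ S
    · obtain ⟨z₀, hz₀c, hz₀⟩ := div_cert hLI habs (hcert i hi)
      obtain ⟨v, hv1, hv2, hv3⟩ := tested_multi hidem habs hLI hsq (S.erase i)
        (fun j => x j) (fun j => y * c i j) hz₀
        (fun j hj => hV i hi j (Finset.mem_of_mem_erase hj)
          (fun heq => (Finset.ne_of_mem_erase hj) heq.symm))
      exact ⟨v, fun _ => ⟨hv1, sle_trans hv2 hz₀c,
        fun j hj hne => hv3 j (Finset.mem_erase.mpr ⟨hne.symm, hj⟩)⟩⟩
    · exact ⟨0, fun h => absurd h hi⟩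
  choose v hv using P1
  have P2 : ∀ i : Fin n, ∃ wi : L, i ∈ S →
      (y * wi = x i ∧ sle wi (v i) ∧ ∀ j ∈ S, i ≠ j → sle (wi * v j) (c i j)) := by
    intro i
    by_cases hi : i ∈ S
    · have hvx : y * v i = x i := (hv i hi).1
      obtain ⟨wi, hw1, hw2, hw3⟩ := tested_multi hidem habs hLI hsq (S.erase i)
        (fun j => v j) (fun j => c i j) hvx (fun j hj => by
          show sle (x i * v j) (y * c i j)
          have hjS : j ∈ S := Finset.mem_of_mem_erase hj
          have hji : j ≠ i := Finset.ne_of_mem_erase hj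
          have h1 : sle (v j * x i) (y * c j i) := (hv j hjS).2.2 i hi hji
          have h2 : x i * v j = v j * x i := mul_comm _ _
          rw [h2, hcsym i j]
          exact h1)
      exact ⟨wi, fun _ => ⟨hw1, hw2,
        fun j hj hne => hw3 j (Finset.mem_erase.mpr ⟨hne.symm, hj⟩)⟩⟩
    · exact ⟨0, fun h => absurd h hi⟩
  choose w hw using P2
  refine ⟨w, fun i hi => ⟨(hw i hi).1,
    sle_trans (hw i hi).2.1 (hv i hi).2.1, fun j hj hne => ?_⟩⟩
  have h1 : sle (w i * w j) (w i * v j) := sle_mul_left (w i) (hw j hj).2.1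
  exact sle_trans h1 ((hw i hi).2.2 j hj hne)

theorem BBt_apply {n m : ℕ} (B : Matrix (Fin n) (Fin m) L) (i j : Fin n) :
    (B * Bᵀ) i j = ∑ k, B i k * B j k := by
  simp [Matrix.mul_apply]

theorem BBt_symm {n m : ℕ} (B : Matrix (Fin n) (Fin m) L) (i j : Fin n) :
    (B * Bᵀ) i j = (B * Bᵀ) j i := by
  rw [BBt_apply, BBt_apply]
  exact Finset.sum_congr rfl (fun k _ => mul_comm _ _)

theorem BBt_cauchy (hidem : ∀ a : L, a + a = a)
    (hAG : ∀ x y : L, x * y + (x * x + y * y) = x * x + y * y)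
    {n m : ℕ} (B : Matrix (Fin n) (Fin m) L) (i j : Fin n) :
    sle ((B * Bᵀ) i j * (B * Bᵀ) i j) ((B * Bᵀ) i i * (B * Bᵀ) j j) := by
  classical
  rw [BBt_apply B i j, BBt_apply B i i, BBt_apply B j j, Finset.sum_mul_sum]
  apply sum_sle
  intro k _
  apply sum_sle
  intro l _
  have e : (B i k * B j k) * (B i l * B j l) = (B i k * B i l) * (B j k * B j l) := by ring
  rw [e]
  have h1 : sle (B i k * B i l) (∑ t, B i t * B i t) := by
    have hAGk : sle (B i k * B i l) (B i k * B i k + B i l * B i l) := hAG (B i k) (B i l)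
    refine sle_trans hAGk (add_sle ?_ ?_)
    · exact sle_sum hidem _ _ (Finset.mem_univ k) (sle_refl hidem _)
    · exact sle_sum hidem _ _ (Finset.mem_univ l) (sle_refl hidem _)
  have h2 : sle (B j k * B j l) (∑ t, B j t * B j t) := by
    have hAGk : sle (B j k * B j l) (B j k * B j k + B j l * B j l) := hAG (B j k) (B j l)
    refine sle_trans hAGk (add_sle ?_ ?_)
    · exact sle_sum hidem _ _ (Finset.mem_univ k) (sle_refl hidem _)
    · exact sle_sum hidem _ _ (Finset.mem_univ l) (sle_refl hidem _)
  exact sle_mul_mul h1 h2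

/-- The main construction, for the "right" condition. -/
theorem main_right (hidem : ∀ a : L, a + a = a) (habs : ∀ a b : L, a + a * b = a)
    (hLI : ∀ x y : L, x + y = y → ∃ z : L, x = y * z)
    (hsq : ∀ x : L, ∃! c : L, c * c = x)
    (hAG : ∀ x y : L, x * y + (x * x + y * y) = x * x + y * y)
    {n : ℕ} (A : Matrix (Fin n) (Fin n) L)
    (hcp : ∃ m : ℕ, ∃ B : Matrix (Fin n) (Fin m) L, A = B * Bᵀ)
    (hcond : ∀ i k l : Fin n, i < k → i < l → k ≠ l →
        A i l * A k i + A i i * A k l = A i i * A k l) :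
    ∃ C : Matrix (Fin n) (Fin n) L, A = C * Cᵀ := by
  classical
  obtain ⟨m, B, hB⟩ := hcp
  have hAs : ∀ i j, A i j = A j i := fun i j => by rw [hB]; exact BBt_symm B i j
  have hAc : ∀ i j, sle (A i j * A i j) (A i i * A j j) := fun i j => by
    rw [hB]; exact BBt_cauchy hidem hAG B i j
  have COL : ∀ k : Fin n, ∃ w : Fin n → L,
      ∀ i ∈ Finset.univ.filter (fun i : Fin n => k < i),
        (rt hsq (A k k) * w i = A i k) ∧ sle (w i) (rt hsq (A i i)) ∧
        ∀ j ∈ Finset.univ.filter (fun i : Fin n => k < i), i ≠ j →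
          sle (w i * w j) (A i j) := by
    intro k
    refine family hidem habs hLI hsq (Finset.univ.filter (fun i : Fin n => k < i))
      (rt hsq (A k k)) (fun i => A i k) (fun i j => A i j) (fun i => rt hsq (A i i))
      (fun i j => hAs i j) ?_ ?_
    · intro i _
      show sle (A i k) (rt hsq (A k k) * rt hsq (A i i))
      apply sle_of_sq hidem hsq hAG
      have e : rt hsq (A k k) * rt hsq (A i i) * (rt hsq (A k k) * rt hsq (A i i))
          = A k k * A i i := by
        calc rt hsq (A k k) * rt hsq (A i i) * (rt hsq (A k k) * rt hsq (A i i))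
            = (rt hsq (A k k) * rt hsq (A k k)) * (rt hsq (A i i) * rt hsq (A i i)) := by
              ring
          _ = A k k * A i i := by rw [rt_sq, rt_sq]
      rw [e]
      have h := hAc i k
      rw [mul_comm (A i i) (A k k)] at h
      exact h
    · intro i hi j hj hne
      have hki : k < i := (Finset.mem_filter.mp hi).2
      have hkj : k < j := (Finset.mem_filter.mp hj).2
      have h := hcond k i j hki hkj hne
      show sle (A i k * A j k) (rt hsq (A k k) * (rt hsq (A k k) * A i j))
      have e2 : rt hsq (A k k) * (rt hsq (A k k) * A i j) = A k k * A i j := by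
        calc rt hsq (A k k) * (rt hsq (A k k) * A i j)
            = (rt hsq (A k k) * rt hsq (A k k)) * A i j := by ring
          _ = A k k * A i j := by rw [rt_sq]
      rw [e2]
      have e3 : A i k * A j k = A k j * A i k := by rw [hAs j k]; ring
      rw [e3]
      exact h
  choose w hw using COL
  have memS : ∀ {k i : Fin n}, k < i → i ∈ Finset.univ.filter (fun i : Fin n => k < i) :=
    fun h => Finset.mem_filter.mpr ⟨Finset.mem_univ _, h⟩
  have hwE : ∀ {k i : Fin n}, k < i → rt hsq (A k k) * w k i = A i k :=
    fun {k i} h => (hw k i (memS h)).1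
  have hwB : ∀ {k i : Fin n}, k < i → sle (w k i) (rt hsq (A i i)) :=
    fun {k i} h => (hw k i (memS h)).2.1
  have hwP : ∀ {k i j : Fin n}, k < i → k < j → i ≠ j → sle (w k i * w k j) (A i j) :=
    fun {k i j} hi hj hne => (hw k i (memS hi)).2.2 j (memS hj) hne
  set f : Fin n → Fin n → L :=
    fun i k => if i = k then rt hsq (A i i) else if k < i then w k i else 0 with hf
  have fdiag : ∀ i : Fin n, f i i = rt hsq (A i i) := by
    intro i; simp [hf]
  have flow : ∀ {i k : Fin n}, k < i → f i k = w k i := by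
    intro i k h
    have hne : i ≠ k := (ne_of_gt h)
    simp [hf, hne, h]
  have fzero : ∀ {i k : Fin n}, ¬ k < i → i ≠ k → f i k = 0 := by
    intro i k h hne
    simp [hf, hne, h]
  refine ⟨Matrix.of f, ?_⟩
  ext i j
  have expand : (Matrix.of f * (Matrix.of f)ᵀ) i j = ∑ k, f i k * f j k := by
    rw [Matrix.mul_apply]
    simp [Matrix.transpose_apply]
  rw [expand]
  have hub : ∀ k : Fin n, sle (f i k * f j k) (A i j) := by
    intro k
    by_cases hik : i = k
    · by_cases hjk : j = k
      · subst hik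
        have hij : i = j := hjk.symm
        subst hij
        rw [fdiag, rt_sq]
        exact sle_refl hidem _
      · subst hik
        by_cases hij : i < j
        · rw [fdiag, flow hij, hwE hij, hAs j i]
          exact sle_refl hidem _
        · rw [fzero hij hjk, mul_zero]
          exact zero_sle _
    · by_cases hjk : j = k
      · subst hjk
        by_cases hji : j < i
        · rw [fdiag, flow hji, mul_comm, hwE hji]
          exact sle_refl hidem _
        · rw [fzero hji hik, zero_mul]
          exact zero_sle _
      · by_cases hki : k < i
        · by_cases hkj : k < j
          · rw [flow hki, flow hkj]
            by_cases hij : i = j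
            · subst hij
              have h1 := sle_mul_mul (hwB hki) (hwB hki)
              rw [rt_sq] at h1
              exact h1
            · exact hwP hki hkj hij
          · rw [fzero hkj hjk, mul_zero]
            exact zero_sle _
        · rw [fzero hki hik, zero_mul]
          exact zero_sle _
  have h2 : sle (∑ k, f i k * f j k) (A i j) :=
    sum_sle _ _ _ (fun k _ => hub k)
  have h1 : sle (A i j) (∑ k, f i k * f j k) := by
    rcases lt_trichotomy i j with h | h | h
    · refine sle_sum hidem _ _ (Finset.mem_univ i) ?_
      rw [fdiag, flow h, hwE h, hAs j i]
      exact sle_refl hidem _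
    · subst h
      refine sle_sum hidem _ _ (Finset.mem_univ i) ?_
      rw [fdiag, rt_sq]
      exact sle_refl hidem _
    · refine sle_sum hidem _ _ (Finset.mem_univ j) ?_
      rw [fdiag, flow h, mul_comm, hwE h]
      exact sle_refl hidem _
  exact sle_antisymm h1 h2

end Stmt14

/-- If `A` is an n×n completely positive matrix (n ≥ 3) over a
normal incline such that either all its left almost principal 2×2 submatrices
or all its right almost principal 2×2 submatrices have `det⁺ ≥ det⁻`, then the
CP-rank of `A` is at most n. -/
theorem stmt_14 {L : Type*} [CommSemiring L]
    (hidem : ∀ a : L, a + a = a)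
    (habs : ∀ a b : L, a + a * b = a)
    (hLI : ∀ x y : L, x + y = y → ∃ z : L, x = y * z)
    (hsq : ∀ x : L, ∃! c : L, c * c = x)
    (hAG : ∀ x y : L, x * y + (x * x + y * y) = x * x + y * y)
    (n : ℕ) (hn : 3 ≤ n) (A : Matrix (Fin n) (Fin n) L)
    (hcp : ∃ m : ℕ, ∃ B : Matrix (Fin n) (Fin m) L, A = B * Bᵀ)
    (h : (∀ i j k : Fin n, i < k → j < k → i ≠ j →
            A i k * A k j + A i j * A k k = A i j * A k k) ∨
         (∀ i k l : Fin n, i < k → i < l → k ≠ l →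
            A i l * A k i + A i i * A k l = A i i * A k l)) :
    ∃ B : Matrix (Fin n) (Fin n) L, A = B * Bᵀ := by

  rcases h with hL | hR
  · -- left condition: reverse the index order and use the right-condition theorem
    obtain ⟨m, B, hB⟩ := hcp
    set A' : Matrix (Fin n) (Fin n) L := A.submatrix Fin.rev Fin.rev with hA'
    have hcp' : ∃ m' : ℕ, ∃ B' : Matrix (Fin n) (Fin m') L, A' = B' * B'ᵀ := by
      refine ⟨m, B.submatrix Fin.rev id, ?_⟩
      ext i j
      simp [hA', Matrix.submatrix_apply, Matrix.mul_apply, hB]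
    have hcond' : ∀ i k l : Fin n, i < k → i < l → k ≠ l →
        A' i l * A' k i + A' i i * A' k l = A' i i * A' k l := by
      intro i k l hik hil hkl
      have h1 : Fin.rev k < Fin.rev i := Fin.rev_lt_rev.mpr hik
      have h2 : Fin.rev l < Fin.rev i := Fin.rev_lt_rev.mpr hil
      have h3 : Fin.rev k ≠ Fin.rev l := fun hc => hkl (Fin.rev_injective hc)
      have h := hL (Fin.rev k) (Fin.rev l) (Fin.rev i) h1 h2 h3
      show A (Fin.rev i) (Fin.rev l) * A (Fin.rev k) (Fin.rev i) +
          A (Fin.rev i) (Fin.rev i) * A (Fin.rev k) (Fin.rev l) =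
          A (Fin.rev i) (Fin.rev i) * A (Fin.rev k) (Fin.rev l)
      rw [mul_comm (A (Fin.rev i) (Fin.rev l)) (A (Fin.rev k) (Fin.rev i)),
        mul_comm (A (Fin.rev i) (Fin.rev i)) (A (Fin.rev k) (Fin.rev l))]
      exact h
    obtain ⟨C', hC'⟩ := Stmt14.main_right hidem habs hLI hsq hAG A' hcp' hcond'
    refine ⟨C'.submatrix Fin.rev id, ?_⟩
    ext i j
    have e1 : (C'.submatrix Fin.rev id * (C'.submatrix Fin.rev id)ᵀ) i j
        = (C' * C'ᵀ) (Fin.rev i) (Fin.rev j) := by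
      simp [Matrix.mul_apply, Matrix.submatrix_apply]
    rw [e1, ← hC']
    simp [hA', Matrix.submatrix_apply, Fin.rev_rev]
  · exact Stmt14.main_right hidem habs hLI hsq hAG A hcp hR
end

section
/- Let L be a totally ordered normal incline and let A be a 3×3 completely positive matrix over L. Then at least two of the following three inequalities hold: A₁₁ * A₂₃ ≥ A₁₂ * A₁₃, A₂₂ * A₁₃ ≥ A₁₂ * A₂₃, and A₃₃ * A₁₂ ≥ A₁₃ * A₂₃ (inequalities are with respect to the incline order). -/
open Matrix

/-- For a 3×3 completely positive matrix over a totally ordered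
normal incline, at least two of the three inequalities
`A₁₁*A₂₃ ≥ A₁₂*A₁₃`, `A₂₂*A₁₃ ≥ A₁₂*A₂₃`, `A₃₃*A₁₂ ≥ A₁₃*A₂₃` hold
(w.r.t. the incline order `x ≤ y ↔ x + y = y`). -/
theorem stmt_15 {L : Type*} [CommSemiring L]
    (hidem : ∀ a : L, a + a = a)
    (habs : ∀ a b : L, a + a * b = a)
    (hLI : ∀ x y : L, x + y = y → ∃ z : L, x = y * z)
    (hsq : ∀ x : L, ∃! c : L, c * c = x)
    (hAG : ∀ x y : L, x * y + (x * x + y * y) = x * x + y * y)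
    (htot : ∀ x y : L, x + y = y ∨ y + x = x)
    (A : Matrix (Fin 3) (Fin 3) L)
    (hcp : ∃ m : ℕ, ∃ B : Matrix (Fin 3) (Fin m) L, A = B * Bᵀ) :
    (A 0 1 * A 0 2 + A 0 0 * A 1 2 = A 0 0 * A 1 2 ∧
       A 0 1 * A 1 2 + A 1 1 * A 0 2 = A 1 1 * A 0 2) ∨
    (A 0 1 * A 0 2 + A 0 0 * A 1 2 = A 0 0 * A 1 2 ∧
       A 0 2 * A 1 2 + A 2 2 * A 0 1 = A 2 2 * A 0 1) ∨
    (A 0 1 * A 1 2 + A 1 1 * A 0 2 = A 1 1 * A 0 2 ∧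
       A 0 2 * A 1 2 + A 2 2 * A 0 1 = A 2 2 * A 0 1) := by
  obtain ⟨m, B, hAB⟩ := hcp
  -- transitivity of the incline order
  have le_trans' : ∀ x y z : L, x + y = y → y + z = z → x + z = z := by
    intro x y z h1 h2
    calc x + z = x + (y + z) := by rw [h2]
      _ = (x + y) + z := by ring
      _ = y + z := by rw [h1]
      _ = z := h2
  -- entries of A as sums
  have hA : ∀ i j, A i j = ∑ k, B i k * B j k := by
    intro i j
    rw [hAB, Matrix.mul_apply]
    simp [Matrix.transpose_apply]
  -- each term is ≤ the sum
  have term_le_sum : ∀ (f : Fin m → L) (j : Fin m),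
      f j + ∑ k, f k = ∑ k, f k := by
    intro f j
    rw [← Finset.add_sum_erase _ f (Finset.mem_univ j), ← add_assoc, hidem]
  -- a nonempty sum equals one of its terms (total order + idempotency)
  have sum_eq : ∀ (s : Finset (Fin m)) (f : Fin m → L), s.Nonempty →
      ∃ i ∈ s, ∑ k ∈ s, f k = f i := by
    intro s f hs
    induction hs using Finset.Nonempty.cons_induction with
    | singleton a => exact ⟨a, Finset.mem_singleton_self a, Finset.sum_singleton f a⟩
    | cons a s ha hs ih =>
      obtain ⟨i, hi, hsum⟩ := ih
      rw [Finset.sum_cons, hsum]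
      rcases htot (f a) (f i) with h | h
      · exact ⟨i, Finset.mem_cons_of_mem hi, h⟩
      · exact ⟨a, Finset.mem_cons_self a s, by rw [add_comm]; exact h⟩
  -- the key chain lemma:  x*x ≤ d  and  y*s2 ≤ x*s1   imply   (x*y)*s2 ≤ d*s1
  have main : ∀ x y d s1 s2 : L, (x * x + d = d) →
      (y * s2 + x * s1 = x * s1) →
      (x * y) * s2 + d * s1 = d * s1 := by
    intro x y d s1 s2 hx hle
    have h1 : (x * y) * s2 + (x * x) * s1 = (x * x) * s1 := by
      calc (x * y) * s2 + (x * x) * s1 = x * (y * s2 + x * s1) := by ring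
        _ = x * (x * s1) := by rw [hle]
        _ = (x * x) * s1 := by ring
    have h2 : (x * x) * s1 + d * s1 = d * s1 := by rw [← add_mul, hx]
    exact le_trans' _ _ _ h1 h2
  rcases Nat.eq_zero_or_pos m with hm | hm
  · -- m = 0 : A is the zero matrix
    subst hm
    left
    constructor <;> simp [hA]
  · -- maximizing indices for the three off-diagonal entries
    have hne : (Finset.univ : Finset (Fin m)).Nonempty := ⟨⟨0, hm⟩, Finset.mem_univ _⟩
    obtain ⟨p, -, hp⟩ := sum_eq Finset.univ (fun k => B 0 k * B 1 k) hne
    obtain ⟨q, -, hq⟩ := sum_eq Finset.univ (fun k => B 0 k * B 2 k) hne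
    obtain ⟨r, -, hr⟩ := sum_eq Finset.univ (fun k => B 1 k * B 2 k) hne
    have hA01 : A 0 1 = B 0 p * B 1 p := by rw [hA 0 1]; exact hp
    have hA02 : A 0 2 = B 0 q * B 2 q := by rw [hA 0 2]; exact hq
    have hA12 : A 1 2 = B 1 r * B 2 r := by rw [hA 1 2]; exact hr
    -- diagonal bounds
    have h00p : B 0 p * B 0 p + A 0 0 = A 0 0 := by
      rw [hA 0 0]; exact term_le_sum (fun k => B 0 k * B 0 k) p
    have h00q : B 0 q * B 0 q + A 0 0 = A 0 0 := by
      rw [hA 0 0]; exact term_le_sum (fun k => B 0 k * B 0 k) q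
    have h11p : B 1 p * B 1 p + A 1 1 = A 1 1 := by
      rw [hA 1 1]; exact term_le_sum (fun k => B 1 k * B 1 k) p
    have h11r : B 1 r * B 1 r + A 1 1 = A 1 1 := by
      rw [hA 1 1]; exact term_le_sum (fun k => B 1 k * B 1 k) r
    have h22q : B 2 q * B 2 q + A 2 2 = A 2 2 := by
      rw [hA 2 2]; exact term_le_sum (fun k => B 2 k * B 2 k) q
    have h22r : B 2 r * B 2 r + A 2 2 = A 2 2 := by
      rw [hA 2 2]; exact term_le_sum (fun k => B 2 k * B 2 k) r
    set I1 := (A 0 1 * A 0 2 + A 0 0 * A 1 2 = A 0 0 * A 1 2) with hI1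
    set I2 := (A 0 1 * A 1 2 + A 1 1 * A 0 2 = A 1 1 * A 0 2) with hI2
    set I3 := (A 0 2 * A 1 2 + A 2 2 * A 0 1 = A 2 2 * A 0 1) with hI3
    have key12 : I1 ∨ I2 := by
      rcases htot (B 1 p * A 0 2) (B 0 p * A 1 2) with h | h
      · left
        have := main (B 0 p) (B 1 p) (A 0 0) (A 1 2) (A 0 2) h00p h
        rw [hI1, hA01]; exact this
      · right
        have := main (B 1 p) (B 0 p) (A 1 1) (A 0 2) (A 1 2) h11p h
        rw [hI2, hA01]
        calc B 0 p * B 1 p * A 1 2 + A 1 1 * A 0 2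
            = B 1 p * B 0 p * A 1 2 + A 1 1 * A 0 2 := by ring
          _ = A 1 1 * A 0 2 := this
    have key13 : I1 ∨ I3 := by
      rcases htot (B 2 q * A 0 1) (B 0 q * A 1 2) with h | h
      · left
        have := main (B 0 q) (B 2 q) (A 0 0) (A 1 2) (A 0 1) h00q h
        rw [hI1, hA02]
        calc A 0 1 * (B 0 q * B 2 q) + A 0 0 * A 1 2
            = B 0 q * B 2 q * A 0 1 + A 0 0 * A 1 2 := by ring
          _ = A 0 0 * A 1 2 := this
      · right
        have := main (B 2 q) (B 0 q) (A 2 2) (A 0 1) (A 1 2) h22q h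
        rw [hI3, hA02]
        calc B 0 q * B 2 q * A 1 2 + A 2 2 * A 0 1
            = B 2 q * B 0 q * A 1 2 + A 2 2 * A 0 1 := by ring
          _ = A 2 2 * A 0 1 := this
    have key23 : I2 ∨ I3 := by
      rcases htot (B 2 r * A 0 1) (B 1 r * A 0 2) with h | h
      · left
        have := main (B 1 r) (B 2 r) (A 1 1) (A 0 2) (A 0 1) h11r h
        rw [hI2, hA12]
        calc A 0 1 * (B 1 r * B 2 r) + A 1 1 * A 0 2
            = B 1 r * B 2 r * A 0 1 + A 1 1 * A 0 2 := by ring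
          _ = A 1 1 * A 0 2 := this
      · right
        have := main (B 2 r) (B 1 r) (A 2 2) (A 0 1) (A 0 2) h22r h
        rw [hI3, hA12]
        calc A 0 2 * (B 1 r * B 2 r) + A 2 2 * A 0 1
            = B 2 r * B 1 r * A 0 2 + A 2 2 * A 0 1 := by ring
          _ = A 2 2 * A 0 1 := this
    tauto
end

section
/- Let L be a totally ordered normal incline and let A be a 3×3 completely positive matrix over L. Then A is either LU-completely positive or UL-completely positive (or both): there exists a 3×3 lower triangular matrix C over L with A = C * Cᵀ, or there exists a 3×3 upper triangular matrix U over L with A = U * Uᵀ. -/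
open Matrix

set_option maxHeartbeats 1000000 in
/-- Every 3×3 completely positive matrix over a totally ordered
normal incline is LU-completely positive or UL-completely positive (or both). -/
theorem stmt_16 {L : Type*} [CommSemiring L]
    (hidem : ∀ a : L, a + a = a)
    (habs : ∀ a b : L, a + a * b = a)
    (hLI : ∀ x y : L, x + y = y → ∃ z : L, x = y * z)
    (hsq : ∀ x : L, ∃! c : L, c * c = x)
    (hAG : ∀ x y : L, x * y + (x * x + y * y) = x * x + y * y)
    (htot : ∀ x y : L, x + y = y ∨ y + x = x)
    (A : Matrix (Fin 3) (Fin 3) L)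
    (hcp : ∃ m : ℕ, ∃ B : Matrix (Fin 3) (Fin m) L, A = B * Bᵀ) :
    (∃ C : Matrix (Fin 3) (Fin 3) L, (∀ i j : Fin 3, i < j → C i j = 0) ∧
        A = C * Cᵀ) ∨
    (∃ U : Matrix (Fin 3) (Fin 3) L, (∀ i j : Fin 3, j < i → U i j = 0) ∧
        A = U * Uᵀ) := by
  classical
  obtain ⟨m, B, hB⟩ := hcp
  -- basic order facts, where `x ≤ y` is encoded as `x + y = y`
  have hmono : ∀ {x y : L} (c : L), x + y = y → x * c + y * c = y * c := by
    intro x y c h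
    rw [← add_mul, h]
  have htrans : ∀ {x y z : L}, x + y = y → y + z = z → x + z = z := by
    intro x y z h1 h2
    rw [← h2, ← add_assoc, h1]
  have absb : ∀ M t : L, M * t + M = M := by
    intro M t
    rw [add_comm]
    exact habs M t
  -- square comparison: x*x ≤ y*y → x ≤ y
  have hsqle : ∀ x y : L, x * x + y * y = y * y → x + y = y := by
    intro x y hxy
    rcases htot x y with h | h
    · exact h
    · -- y ≤ x, so y*y ≤ x*y ≤ x*x, whence x*x = y*y and x = y
      have h1 : y * y + x * y = x * y := hmono y h
      have h2 : x * y + x * x = x * x := by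
        have := hmono x h
        rwa [mul_comm y x, mul_comm x x] at this  -- shape fix below
      have h3 : y * y + x * x = x * x := htrans h1 h2
      have hxx : x * x = y * y := by
        calc x * x = y * y + x * x := h3.symm
          _ = x * x + y * y := add_comm _ _
          _ = y * y := hxy
      obtain ⟨c, hc, hun⟩ := hsq (y * y)
      have hx : x = c := hun x hxx
      have hy : y = c := hun y rfl
      rw [hx, hy, hidem]
  -- entries of A
  have hA : ∀ i j, A i j = ∑ k, B i k * B j k := by
    intro i j
    rw [hB, Matrix.mul_apply]
    exact Finset.sum_congr rfl fun k _ => by rw [Matrix.transpose_apply]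
  have hsym : ∀ i j, A i j = A j i := by
    intro i j
    rw [hA i j, hA j i]
    exact Finset.sum_congr rfl fun k _ => mul_comm _ _
  -- square roots of diagonal entries
  obtain ⟨d0, hd0, -⟩ := hsq (A 0 0)
  obtain ⟨d1, hd1, -⟩ := hsq (A 1 1)
  obtain ⟨d2, hd2, -⟩ := hsq (A 2 2)
  -- each entry of B is at most the corresponding d
  have hBle : ∀ (i : Fin 3) (d : L), d * d = A i i → ∀ k, B i k + d = d := by
    intro i d hd k
    apply hsqle
    rw [hd, hA i i, ← Finset.add_sum_erase _ _ (Finset.mem_univ k), ← add_assoc,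
      hidem]
  -- bounded sums
  have hsumle : ∀ (s : Finset (Fin m)) (f : Fin m → L) (M : L),
      (∀ k, f k + M = M) → (∑ k ∈ s, f k) + M = M := by
    intro s f M hf
    induction s using Finset.induction_on with
    | empty => simp
    | insert _ _ h ih => rw [Finset.sum_insert h, add_assoc, ih, hf]
  -- off-diagonal bounds : A i j ≤ d_i d_j
  have hle : ∀ (i j : Fin 3) (d e : L), d * d = A i i → e * e = A j j →
      A i j + d * e = d * e := by
    intro i j d e hd he
    rw [hA i j]
    apply hsumle
    intro k
    have t1 : B i k * B j k + d * B j k = d * B j k := by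
      have := hmono (B j k) (hBle i d hd k)
      exact this
    have t2 : d * B j k + d * e = d * e := by
      have := hmono d (hBle j e he k)
      rwa [mul_comm (B j k) d, mul_comm e d] at this
    exact htrans t1 t2
  obtain ⟨z, hz⟩ := hLI (A 0 1) (d0 * d1) (hle 0 1 d0 d1 hd0 hd1)
  obtain ⟨w, hw⟩ := hLI (A 0 2) (d0 * d2) (hle 0 2 d0 d2 hd0 hd2)
  obtain ⟨s, hs⟩ := hLI (A 1 2) (d1 * d2) (hle 1 2 d1 d2 hd1 hd2)
  rcases htot (d0 * d1 * (w * s)) (A 0 1) with hUL | hLU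
  · -- UL-complete positivity
    right
    refine ⟨Matrix.of ![![d0, d0 * z, d0 * w], ![0, d1, d1 * s], ![0, 0, d2]],
      ?_, ?_⟩
    · intro i j hij
      fin_cases i <;> fin_cases j <;> first | rfl | exact absurd hij (by decide)
    · ext i j
      rw [Matrix.mul_apply]
      fin_cases i <;> fin_cases j <;>
        simp [Matrix.transpose_apply, Fin.sum_univ_three]
      · -- (0,0)
        rw [show d0 * d0 + d0 * z * (d0 * z) + d0 * w * (d0 * w)
            = d0 * d0 + (d0 * d0) * (z * z) + (d0 * d0) * (w * w) by ring,
          habs, habs]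
        exact hd0.symm
      · -- (0,1)
        rw [show d0 * z * d1 + d0 * w * (d1 * s)
            = d0 * d1 * z + d0 * d1 * (w * s) by ring, ← hz]
        exact ((add_comm _ _).trans hUL).symm
      · -- (0,2)
        rw [show d0 * w * d2 = d0 * d2 * w by ring]
        exact hw
      · -- (1,0)
        rw [hsym 1 0,
          show d1 * (d0 * z) + d1 * s * (d0 * w)
            = d0 * d1 * z + d0 * d1 * (w * s) by ring, ← hz]
        exact ((add_comm _ _).trans hUL).symm
      · -- (1,1)
        rw [show d1 * d1 + d1 * s * (d1 * s)
            = d1 * d1 + (d1 * d1) * (s * s) by ring, habs]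
        exact hd1.symm
      · -- (1,2)
        rw [show d1 * s * d2 = d1 * d2 * s by ring]
        exact hs
      · -- (2,0)
        rw [hsym 2 0, show d2 * (d0 * w) = d0 * d2 * w by ring]
        exact hw
      · -- (2,1)
        rw [hsym 2 1, show d2 * (d1 * s) = d1 * d2 * s by ring]
        exact hs
      · -- (2,2)
        exact hd2.symm
  · -- LU-complete positivity
    obtain ⟨k, hk⟩ := hLI (A 0 1) (d0 * d1 * (w * s)) hLU
    left
    refine ⟨Matrix.of ![![d0, 0, 0], ![d1 * (w * (s * k)), d1, 0],
      ![d2 * w, d2 * s, d2]], ?_, ?_⟩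
    · intro i j hij
      fin_cases i <;> fin_cases j <;> first | rfl | exact absurd hij (by decide)
    · ext i j
      rw [Matrix.mul_apply]
      fin_cases i <;> fin_cases j <;>
        simp [Matrix.transpose_apply, Fin.sum_univ_three]
      · -- (0,0)
        exact hd0.symm
      · -- (0,1)
        rw [show d0 * (d1 * (w * (s * k))) = d0 * d1 * (w * s) * k by ring]
        exact hk
      · -- (0,2)
        rw [show d0 * (d2 * w) = d0 * d2 * w by ring]
        exact hw
      · -- (1,0)
        rw [hsym 1 0,
          show d1 * (w * (s * k)) * d0 = d0 * d1 * (w * s) * k by ring]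
        exact hk
      · -- (1,1)
        rw [show d1 * (w * (s * k)) * (d1 * (w * (s * k))) + d1 * d1
            = (d1 * d1) * ((w * (s * k)) * (w * (s * k))) + d1 * d1 by ring,
          absb]
        exact hd1.symm
      · -- (1,2)
        rw [show d1 * (w * (s * k)) * (d2 * w) + d1 * (d2 * s)
            = (d1 * d2 * s) * (w * (w * k)) + d1 * d2 * s by ring, ← hs, absb]
      · -- (2,0)
        rw [hsym 2 0, show d2 * w * d0 = d0 * d2 * w by ring]
        exact hw
      · -- (2,1)
        rw [hsym 2 1,
          show d2 * w * (d1 * (w * (s * k))) + d2 * s * d1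
            = (d1 * d2 * s) * (w * (w * k)) + d1 * d2 * s by ring, ← hs, absb]
      · -- (2,2)
        rw [show d2 * w * (d2 * w) + d2 * s * (d2 * s) + d2 * d2
            = (d2 * d2) * (w * w) + ((d2 * d2) * (s * s) + d2 * d2) by ring,
          absb, absb]
        exact hd2.symm
end

section
/- Let L be a normal incline and let A be a 2×2 completely positive matrix over L. Then A is both LU-completely positive and UL-completely positive: there exist a 2×2 lower triangular matrix C over L with A = C * Cᵀ and a 2×2 upper triangular matrix U over L with A = U * Uᵀ. -/
open Matrix

/-- Every 2×2 completely positive matrix over a normal incline is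
both LU-completely positive and UL-completely positive. -/
theorem stmt_18 {L : Type*} [CommSemiring L]
    (hidem : ∀ a : L, a + a = a)
    (habs : ∀ a b : L, a + a * b = a)
    (hLI : ∀ x y : L, x + y = y → ∃ z : L, x = y * z)
    (hsq : ∀ x : L, ∃! c : L, c * c = x)
    (hAG : ∀ x y : L, x * y + (x * x + y * y) = x * x + y * y)
    (A : Matrix (Fin 2) (Fin 2) L)
    (hcp : ∃ m : ℕ, ∃ B : Matrix (Fin 2) (Fin m) L, A = B * Bᵀ) :
    (∃ C : Matrix (Fin 2) (Fin 2) L, (∀ i j : Fin 2, i < j → C i j = 0) ∧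
        A = C * Cᵀ) ∧
    (∃ U : Matrix (Fin 2) (Fin 2) L, (∀ i j : Fin 2, j < i → U i j = 0) ∧
        A = U * Uᵀ) := by
  classical
  obtain ⟨m, B, hB⟩ := hcp
  -- basic order facts for the incline order x ≤ y ↔ x + y = y
  have le_trans' : ∀ x y z : L, x + y = y → y + z = z → x + z = z := by
    intro x y z h1 h2
    calc x + z = x + (y + z) := by rw [h2]
    _ = (x + y) + z := by ring
    _ = y + z := by rw [h1]
    _ = z := h2
  have le_add : ∀ x y z : L, x + z = z → y + z = z → (x + y) + z = z := by
    intro x y z h1 h2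
    calc x + y + z = x + (y + z) := by ring
    _ = x + z := by rw [h2]
    _ = z := h1
  have le_sum : ∀ (s : Finset (Fin m)) (f : Fin m → L) (i : Fin m), i ∈ s →
      f i + ∑ j ∈ s, f j = ∑ j ∈ s, f j := by
    intro s f i hi
    conv_lhs => rw [← Finset.add_sum_erase s f hi]
    rw [← add_assoc, hidem]
    exact Finset.add_sum_erase s f hi
  have sum_le : ∀ (s : Finset (Fin m)) (f : Fin m → L) (z : L),
      (∀ i ∈ s, f i + z = z) → (∑ j ∈ s, f j) + z = z := by
    intro s f z h
    induction s using Finset.induction_on with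
    | empty => simpa using hidem z
    | @insert i s hnot ih =>
        rw [Finset.sum_insert hnot]
        exact le_add _ _ _ (h _ (Finset.mem_insert_self _ _))
          (ih fun i hi => h i (Finset.mem_insert_of_mem hi))
  -- entries of A
  have ha : A 0 0 = ∑ k, B 0 k * B 0 k := by
    rw [hB]; simp [Matrix.mul_apply]
  have hb : A 0 1 = ∑ k, B 0 k * B 1 k := by
    rw [hB]; simp [Matrix.mul_apply]
  have hba : A 1 0 = A 0 1 := by
    rw [hB]; simp [Matrix.mul_apply, mul_comm]
  have hd : A 1 1 = ∑ k, B 1 k * B 1 k := by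
    rw [hB]; simp [Matrix.mul_apply]
  -- a*d as a double sum
  have had : A 0 0 * A 1 1 = ∑ k, ∑ l, (B 0 k * B 0 k) * (B 1 l * B 1 l) := by
    rw [ha, hd, Finset.sum_mul_sum]
  -- each term (B 0 k * B 0 k) * (B 1 l * B 1 l) is ≤ the double sum
  have term_le : ∀ k l : Fin m,
      (B 0 k * B 0 k) * (B 1 l * B 1 l) + A 0 0 * A 1 1 = A 0 0 * A 1 1 := by
    intro k l
    rw [had]
    exact le_trans' _ (∑ l, (B 0 k * B 0 k) * (B 1 l * B 1 l)) _
      (le_sum _ (fun l => (B 0 k * B 0 k) * (B 1 l * B 1 l)) l (Finset.mem_univ l))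
      (le_sum _ (fun k => ∑ l, (B 0 k * B 0 k) * (B 1 l * B 1 l)) k (Finset.mem_univ k))
  -- b * b ≤ a * d
  have hb2 : A 0 1 * A 0 1 + A 0 0 * A 1 1 = A 0 0 * A 1 1 := by
    rw [hb, Finset.sum_mul_sum]
    apply sum_le
    intro k _
    apply sum_le
    intro l _
    have key : (B 0 k * B 1 k) * (B 0 l * B 1 l)
        = (B 0 k * B 1 l) * (B 0 l * B 1 k) := by ring
    have hag := hAG (B 0 k * B 1 l) (B 0 l * B 1 k)
    have h1 : (B 0 k * B 1 l) * (B 0 k * B 1 l) + A 0 0 * A 1 1 = A 0 0 * A 1 1 := by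
      have := term_le k l
      calc (B 0 k * B 1 l) * (B 0 k * B 1 l) + A 0 0 * A 1 1
          = (B 0 k * B 0 k) * (B 1 l * B 1 l) + A 0 0 * A 1 1 := by ring_nf
      _ = A 0 0 * A 1 1 := this
    have h2 : (B 0 l * B 1 k) * (B 0 l * B 1 k) + A 0 0 * A 1 1 = A 0 0 * A 1 1 := by
      have := term_le l k
      calc (B 0 l * B 1 k) * (B 0 l * B 1 k) + A 0 0 * A 1 1
          = (B 0 l * B 0 l) * (B 1 k * B 1 k) + A 0 0 * A 1 1 := by ring_nf
      _ = A 0 0 * A 1 1 := this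
    rw [key]
    exact le_trans' _ _ _ hag (le_add _ _ _ h1 h2)
  -- square roots
  obtain ⟨p, hp, -⟩ := hsq (A 0 0)
  obtain ⟨q, hq, -⟩ := hsq (A 1 1)
  have ht : (p * q) * (p * q) = A 0 0 * A 1 1 := by
    rw [← hp, ← hq]; ring
  -- b*b ≤ (p*q)*(p*q)
  have hbb_t : A 0 1 * A 0 1 + (p * q) * (p * q) = (p * q) * (p * q) := by
    rw [ht]; exact hb2
  -- b*(p*q) ≤ (p*q)*(p*q)
  have hbt_t : A 0 1 * (p * q) + (p * q) * (p * q) = (p * q) * (p * q) := by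
    have h := hAG (A 0 1) (p * q)
    rw [hbb_t] at h
    exact h
  -- (b + p*q)^2 = a*d
  have hbsq2 : (A 0 1 + p * q) * (A 0 1 + p * q) = A 0 0 * A 1 1 := by
    have e : (A 0 1 + p * q) * (A 0 1 + p * q)
        = A 0 1 * A 0 1 + (A 0 1 * (p * q) + A 0 1 * (p * q)) + (p * q) * (p * q) := by
      ring
    rw [e, hidem, add_assoc, hbt_t, hbb_t, ht]
  -- uniqueness of square roots: b ≤ p*q
  obtain ⟨r, -, hru⟩ := hsq (A 0 0 * A 1 1)
  have hble : A 0 1 + p * q = p * q := (hru _ hbsq2).trans (hru _ ht).symm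
  obtain ⟨w, hw⟩ := hLI (A 0 1) (p * q) hble
  refine ⟨⟨!![p, 0; q * w, q], ?_, ?_⟩, ⟨!![p, p * w; 0, q], ?_, ?_⟩⟩
  · intro i j hij
    fin_cases i <;> fin_cases j <;>
      first
        | rfl
        | exact absurd hij (by decide)
  · ext i j
    fin_cases i <;> fin_cases j <;>
      simp only [Matrix.mul_apply, Fin.sum_univ_two, Matrix.transpose_apply,
        Matrix.cons_val', Matrix.cons_val_zero, Matrix.cons_val_one, Matrix.head_cons,
        Matrix.empty_val', Matrix.cons_val_fin_one, Matrix.head_fin_const, Fin.mk_zero, Fin.mk_one]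
    · calc A 0 0 = p * p := hp.symm
      _ = p * p + 0 * 0 := by ring
    · rw [hw]
      show p * q * w = _
      simp
      ring
    · rw [hba, hw]
      show p * q * w = _
      simp
      ring
    · have h := habs (q * q) (w * w)
      calc A 1 1 = q * q := hq.symm
      _ = q * q + q * q * (w * w) := h.symm
      _ = q * w * (q * w) + q * q := by ring
  · intro i j hij
    fin_cases i <;> fin_cases j <;>
      first
        | rfl
        | exact absurd hij (by decide)
  · ext i j
    fin_cases i <;> fin_cases j <;>
      simp only [Matrix.mul_apply, Fin.sum_univ_two, Matrix.transpose_apply,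
        Matrix.cons_val', Matrix.cons_val_zero, Matrix.cons_val_one, Matrix.head_cons,
        Matrix.empty_val', Matrix.cons_val_fin_one, Matrix.head_fin_const, Fin.mk_zero, Fin.mk_one]
    · have h := habs (p * p) (w * w)
      calc A 0 0 = p * p := hp.symm
      _ = p * p + p * p * (w * w) := h.symm
      _ = p * p + p * w * (p * w) := by ring
    · rw [hw]
      show p * q * w = _
      simp
      ring
    · rw [hba, hw]
      show p * q * w = _
      simp
      ring
    · calc A 1 1 = q * q := hq.symm
      _ = 0 * 0 + q * q := by ring
end
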